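/- arXiv:1011.4662 — 3 statements merged into one kernel-verified Lean document; each statement's English description precedes it below -/
import Mathlib

section
/- Let I ⊂ k[x_1,…,x_n] be a Borel fixed monomial ideal, not a prime ideal, with all minimal generators of degree ≤ d. Let l = ν(I) be the maximal index of a variable dividing a minimal generator of I, let m be the lexicographically largest element of { u ∈ G(I) : ν(u) = l } (assume m ≠ x_l), and set m_1 = m / x_l. Then the ideal I + (m_1) is also Borel fixed. -/
open MvPolynomial CategoryTheory

namespace Pol


/-- Total degree of an exponent vector. -/
def degE {σ : Type} (a : σ →₀ ℕ) : ℕ := a.sum fun _ e => e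

/-- `I` is a monomial ideal. -/
def IsMonomialIdeal {σ k : Type} [CommRing k] (I : Ideal (MvPolynomial σ k)) : Prop :=
  ∃ A : Set (σ →₀ ℕ), I = Ideal.span ((fun a => (monomial a 1 : MvPolynomial σ k)) '' A)

/-- `I` is a squarefree monomial ideal. -/
def IsSquarefreeMonomialIdeal {σ k : Type} [CommRing k] (I : Ideal (MvPolynomial σ k)) : Prop :=
  ∃ A : Set (σ →₀ ℕ), (∀ a ∈ A, ∀ i, a i ≤ 1) ∧
    I = Ideal.span ((fun a => (monomial a 1 : MvPolynomial σ k)) '' A)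

/-- Borel fixed (strongly stable) exchange property: `m ∈ I`, `x_i ∣ m`, `j < i`
implies `(x_j/x_i)·m ∈ I`. -/
def IsBorelFixed {n : ℕ} {k : Type} [CommRing k] (I : Ideal (MvPolynomial (Fin n) k)) : Prop :=
  ∀ a : Fin n →₀ ℕ, (monomial a 1 : MvPolynomial (Fin n) k) ∈ I →
    ∀ i j : Fin n, j < i → a i ≠ 0 →
      (monomial (a + Finsupp.single j 1 - Finsupp.single i 1) 1 : MvPolynomial (Fin n) k) ∈ I

/-- `x^a` is a minimal generator of the monomial ideal `I`. -/
def IsMinGen {σ k : Type} [CommRing k] (I : Ideal (MvPolynomial σ k)) (a : σ →₀ ℕ) : Prop :=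
  (monomial a 1 : MvPolynomial σ k) ∈ I ∧
    ∀ i : σ, a i ≠ 0 → (monomial (a - Finsupp.single i 1) 1 : MvPolynomial σ k) ∉ I

/-- partial sum `b_i = a_1 + ⋯ + a_i` (cutoff `i : ℕ`, counting the first `i` variables). -/
def psum {n : ℕ} (a : Fin n →₀ ℕ) (i : ℕ) : ℕ :=
  ∑ j ∈ Finset.univ.filter (fun j : Fin n => (j : ℕ) < i), a j

/-- The exponent vector of `B(x^a)`: the variables `x_{i,j}` with
`b_{i-1}+1 ≤ j ≤ b_i` (in 0-indexed form `b_{i-1} ≤ j < b_i`). -/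
noncomputable def boxExp {n : ℕ} (d : ℕ) (a : Fin n →₀ ℕ) : (Fin n × Fin d) →₀ ℕ :=
  ∑ p ∈ Finset.univ.filter
      (fun p : Fin n × Fin d => psum a (p.1 : ℕ) ≤ (p.2 : ℕ) ∧ (p.2 : ℕ) < psum a ((p.1 : ℕ) + 1)),
    Finsupp.single p 1

/-- The exponent vector of the standard polarization `pol(x^a) = ∏_i x_{i,1} ⋯ x_{i,a_i}`. -/
noncomputable def polExp {n : ℕ} (d : ℕ) (a : Fin n →₀ ℕ) : (Fin n × Fin d) →₀ ℕ :=
  ∑ p ∈ Finset.univ.filter (fun p : Fin n × Fin d => (p.2 : ℕ) < a p.1), Finsupp.single p 1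

/-- `B(I)`, generated by `B(m)` for minimal generators `m` of `I`. -/
noncomputable def boxIdeal {n : ℕ} {k : Type} [CommRing k] (d : ℕ) (I : Ideal (MvPolynomial (Fin n) k)) :
    Ideal (MvPolynomial (Fin n × Fin d) k) :=
  Ideal.span {q | ∃ a : Fin n →₀ ℕ, IsMinGen I a ∧ q = monomial (boxExp d a) 1}

/-- The sequence `Θ = (x_{i,1} - x_{i,j})_{1 ≤ i ≤ n, 2 ≤ j ≤ d}` (0-indexed: `j ≥ 1`). -/
noncomputable def thetaList (n d : ℕ) (k : Type) [CommRing k] : List (MvPolynomial (Fin n × Fin d) k) :=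
  (List.finRange n).flatMap fun i =>
    ((List.finRange d).drop 1).map fun (j : Fin d) =>
      X (i, (⟨0, Nat.lt_of_le_of_lt (Nat.zero_le j.val) j.isLt⟩ : Fin d)) - X (i, j)

/-- The depolarization map `φ : Ŝ → S`, `x_{i,j} ↦ x_i`. -/
noncomputable def phi (n d : ℕ) (k : Type) [CommRing k] :
    MvPolynomial (Fin n × Fin d) k →ₐ[k] MvPolynomial (Fin n) k :=
  rename Prod.fst

/-- `x^a` is strictly larger than `x^c` in the (non-degree) lexicographic order with
`x_1 > x_2 > ⋯ > x_n`. -/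
def lexLT {n : ℕ} (c a : Fin n →₀ ℕ) : Prop :=
  ∃ i : Fin n, c i < a i ∧ ∀ j : Fin n, j < i → c j = a j

lemma mem_span_mono_iff {σ k : Type} [CommRing k] [Nontrivial k] (S : Set (σ →₀ ℕ)) (b : σ →₀ ℕ) :
    (monomial b 1 : MvPolynomial σ k) ∈
      Ideal.span ((fun s => (monomial s 1 : MvPolynomial σ k)) '' S) ↔ ∃ s ∈ S, s ≤ b := by
  classical
  rw [mem_ideal_span_monomial_image, support_monomial]
  simp

lemma mem_of_le {σ k : Type} [CommRing k] [Nontrivial k] {I : Ideal (MvPolynomial σ k)}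
    (hmon : IsMonomialIdeal I) {c b : σ →₀ ℕ}
    (hc : (monomial c 1 : MvPolynomial σ k) ∈ I) (hcb : c ≤ b) :
    (monomial b 1 : MvPolynomial σ k) ∈ I := by
  obtain ⟨S, rfl⟩ := hmon
  rw [mem_span_mono_iff] at hc ⊢
  obtain ⟨s, hsS, hsc⟩ := hc
  exact ⟨s, hsS, hsc.trans hcb⟩

lemma degE_sub_lt {σ : Type} (b : σ →₀ ℕ) (i : σ) (hi : b i ≠ 0) :
    degE (b - Finsupp.single i 1) < degE b := by
  have hle : Finsupp.single i 1 ≤ b := by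
    rw [Finsupp.single_le_iff]; omega
  have h := tsub_add_cancel_of_le hle
  have hadd : ∀ x y : σ →₀ ℕ, degE (x + y) = degE x + degE y := fun x y =>
    Finsupp.sum_add_index' (fun _ => rfl) (fun _ _ _ => rfl)
  have : degE (b - Finsupp.single i 1) + degE (Finsupp.single i 1) = degE b := by
    rw [← hadd, h]
  have h1 : degE (Finsupp.single i 1) = 1 := by
    simp [degE, Finsupp.sum_single_index]
  omega

lemma exists_minGen {σ k : Type} [CommRing k] (I : Ideal (MvPolynomial σ k)) (b : σ →₀ ℕ)
    (hb : (monomial b 1 : MvPolynomial σ k) ∈ I) : ∃ c, IsMinGen I c ∧ c ≤ b := by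
  suffices H : ∀ N b, degE b ≤ N → (monomial b 1 : MvPolynomial σ k) ∈ I →
      ∃ c, IsMinGen I c ∧ c ≤ b from H (degE b) b le_rfl hb
  intro N
  induction N with
  | zero =>
    intro b hN hb
    refine ⟨b, ⟨hb, fun i hi _ => ?_⟩, le_rfl⟩
    have := degE_sub_lt b i hi
    omega
  | succ N ih =>
    intro b hN hb
    by_cases h : ∀ i : σ, b i ≠ 0 → (monomial (b - Finsupp.single i 1) 1 : MvPolynomial σ k) ∉ I
    · exact ⟨b, ⟨hb, h⟩, le_rfl⟩
    · push_neg at h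
      obtain ⟨i, hi, hmem⟩ := h
      have hlt := degE_sub_lt b i hi
      obtain ⟨c, hc, hcb⟩ := ih (b - Finsupp.single i 1) (by omega) hmem
      exact ⟨c, hc, hcb.trans tsub_le_self⟩

lemma key {n : ℕ} {k : Type} [Field k] {I : Ideal (MvPolynomial (Fin n) k)}
    (hmon : IsMonomialIdeal I) (hB : IsBorelFixed I) {il : Fin n} {a : Fin n →₀ ℕ}
    (hnuI : ∀ c : Fin n →₀ ℕ, IsMinGen I c → ∀ j ∈ c.support, j ≤ il)
    (hmax : ∀ c : Fin n →₀ ℕ, IsMinGen I c → c il ≠ 0 → c ≠ a → lexLT c a)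
    (v : Fin n →₀ ℕ) (hv : (monomial v 1 : MvPolynomial (Fin n) k) ∈ I)
    (hvil : v il ≠ 0) (hvsupp : ∀ s, v s ≠ 0 → s ≤ il) (hvne : v ≠ a)
    (hnl : ¬ lexLT v a) :
    (monomial (v - Finsupp.single il 1) 1 : MvPolynomial (Fin n) k) ∈ I := by
  obtain ⟨c, hc, hcv⟩ := exists_minGen I v hv
  have hcv' : ∀ s, c s ≤ v s := fun s => hcv s
  by_cases h1 : c il < v il
  · refine mem_of_le hmon hc.1 ?_
    intro s
    have := hcv' s
    simp only [Finsupp.tsub_apply]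
    rcases eq_or_ne il s with rfl | hs
    · rw [Finsupp.single_eq_same]
      omega
    · rw [Finsupp.single_eq_of_ne' hs]
      omega
  · have hceq : c il = v il := le_antisymm (hcv' il) (not_lt.mp h1)
    by_cases h2 : ∃ s, c s < v s
    · obtain ⟨s, hs⟩ := h2
      have hsne : s ≠ il := by intro h; rw [h] at hs; omega
      have hsle : s ≤ il := hvsupp s (by omega)
      have hd := hB c hc.1 il s (lt_of_le_of_ne hsle hsne) (by omega)
      refine mem_of_le hmon hd ?_
      intro t
      have h3 := hcv' t
      simp only [Finsupp.tsub_apply, Finsupp.add_apply]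
      rcases eq_or_ne il t with rfl | e2
      · rw [Finsupp.single_eq_same, Finsupp.single_eq_of_ne' hsne]
        omega
      · rw [Finsupp.single_eq_of_ne' e2]
        rcases eq_or_ne s t with rfl | e1
        · rw [Finsupp.single_eq_same]
          omega
        · rw [Finsupp.single_eq_of_ne' e1]
          omega
    · push_neg at h2
      have hce : c = v := le_antisymm hcv (fun s => h2 s)
      subst hce
      exact absurd (hmax c hc (hceq ▸ hvil) hvne) hnl



/-- Claim 1: with `l = ν(I)`, `m` the lex-largest minimal generator with
`ν(m) = l` and `m ≠ x_l`, the ideal `I + (m/x_l)` is again a Borel fixed monomial ideal. -/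
theorem borelFixed_add_quotient_generator (n d : ℕ) (k : Type) [Field k]
    (I : Ideal (MvPolynomial (Fin n) k)) (hmon : IsMonomialIdeal I) (hB : IsBorelFixed I)
    (hnp : ¬ I.IsPrime) (hd : ∀ a : Fin n →₀ ℕ, IsMinGen I a → degE a ≤ d)
    (a : Fin n →₀ ℕ) (il : Fin n) (ha : IsMinGen I a) (hail : a il ≠ 0)
    (hasupp : ∀ j ∈ a.support, j ≤ il)
    (hnuI : ∀ c : Fin n →₀ ℕ, IsMinGen I c → ∀ j ∈ c.support, j ≤ il)
    (hmax : ∀ c : Fin n →₀ ℕ, IsMinGen I c → c il ≠ 0 → c ≠ a → lexLT c a)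
    (hne : a ≠ Finsupp.single il 1) :
    IsMonomialIdeal (I ⊔ Ideal.span {(monomial (a - Finsupp.single il 1) 1 :
        MvPolynomial (Fin n) k)})
      ∧ IsBorelFixed (I ⊔ Ideal.span {(monomial (a - Finsupp.single il 1) 1 :
        MvPolynomial (Fin n) k)}) := by
  classical
  obtain ⟨S, hS⟩ := hmon
  have hmon : IsMonomialIdeal I := ⟨S, hS⟩
  set a' : Fin n →₀ ℕ := a - Finsupp.single il 1 with ha'
  have ha'app : ∀ s, a' s = a s - (Finsupp.single il 1 : Fin n →₀ ℕ) s := fun s => rfl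
  have hJ : I ⊔ Ideal.span {(monomial a' 1 : MvPolynomial (Fin n) k)} =
      Ideal.span ((fun s => (monomial s 1 : MvPolynomial (Fin n) k)) '' (S ∪ {a'})) := by
    rw [Set.image_union, Set.image_singleton, Ideal.span_union, hS]
  refine ⟨⟨S ∪ {a'}, hJ⟩, ?_⟩
  intro b hb i j hji hbi
  rw [hJ, mem_span_mono_iff] at hb ⊢
  obtain ⟨s, hsT, hsb⟩ := hb
  rcases hsT with hsS | hs'
  · -- monomial b 1 ∈ I, use Borel property of I
    have hbI : (monomial b 1 : MvPolynomial (Fin n) k) ∈ I := by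
      rw [hS, mem_span_mono_iff]; exact ⟨s, hsS, hsb⟩
    have hbI' := hB b hbI i j hji hbi
    rw [hS, mem_span_mono_iff] at hbI'
    obtain ⟨t, htS, ht⟩ := hbI'
    exact ⟨t, Or.inl htS, ht⟩
  · rw [Set.mem_singleton_iff] at hs'
    subst hs'
    have hab : ∀ t, a' t ≤ b t := fun t => hsb t
    have hij : i ≠ j := (ne_of_lt hji).symm
    by_cases hlt : a' i < b i
    · refine ⟨a', Or.inr rfl, ?_⟩
      intro t
      have h1 := hab t
      simp only [Finsupp.tsub_apply, Finsupp.add_apply]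
      rcases eq_or_ne i t with rfl | e1
      · rw [Finsupp.single_eq_same, Finsupp.single_eq_of_ne' (Ne.symm hij)]
        omega
      · rw [Finsupp.single_eq_of_ne' e1]
        omega
    · -- a' i = b i ≥ 1
      have hbi1 : 1 ≤ b i := Nat.one_le_iff_ne_zero.mpr hbi
      have ha'i : a' i = b i := le_antisymm (hab i) (not_lt.mp hlt)
      have ha'i1 : 1 ≤ a' i := by omega
      have haia : a' i ≤ a i := by
        rw [ha'app]; exact Nat.sub_le _ _
      have hai : a i ≠ 0 := by omega
      have hiil : i ≤ il := hasupp i (Finsupp.mem_support_iff.mpr hai)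
      have hjil : j < il := lt_of_lt_of_le hji hiil
      have hail1 : 1 ≤ a il := Nat.one_le_iff_ne_zero.mpr hail
      set v : Fin n →₀ ℕ := a + Finsupp.single j 1 - Finsupp.single i 1 with hv
      have hvapp : ∀ s, v s = a s + (Finsupp.single j 1 : Fin n →₀ ℕ) s
          - (Finsupp.single i 1 : Fin n →₀ ℕ) s := fun s => rfl
      have hvI : (monomial v 1 : MvPolynomial (Fin n) k) ∈ I := hB a ha.1 i j hji hai
      have hvj : v j = a j + 1 := by
        rw [hvapp, Finsupp.single_eq_same, Finsupp.single_eq_of_ne' hij]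
        omega
      have h2il : a' il = a il - 1 := by
        rw [ha'app, Finsupp.single_eq_same]
      have hvil : v il ≠ 0 := by
        rw [hvapp, Finsupp.single_eq_of_ne' (ne_of_lt hjil)]
        rcases eq_or_ne i il with e | e
        · have h4 : 1 ≤ a' il := e ▸ ha'i1
          rw [e, Finsupp.single_eq_same]
          omega
        · rw [Finsupp.single_eq_of_ne' e]
          omega
      have hvsupp : ∀ s, v s ≠ 0 → s ≤ il := by
        intro s hs
        rcases eq_or_ne j s with rfl | e
        · exact le_of_lt hjil
        · rw [hvapp, Finsupp.single_eq_of_ne' e] at hs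
          have : a s ≠ 0 := by omega
          exact hasupp s (Finsupp.mem_support_iff.mpr this)
      have hvne : v ≠ a := by
        intro h
        have := DFunLike.congr_fun h j
        omega
      have hnl : ¬ lexLT v a := by
        rintro ⟨t, ht1, ht2⟩
        have hti : i = t := by
          by_contra h
          rw [hvapp, Finsupp.single_eq_of_ne' h] at ht1
          rcases eq_or_ne j t with rfl | e
          · rw [Finsupp.single_eq_same] at ht1; omega
          · rw [Finsupp.single_eq_of_ne' e] at ht1; omega
        subst hti
        have := ht2 j hji
        omega
      have hkey := key hmon hB hnuI hmax v hvI hvil hvsupp hvne hnl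
      rw [hS, mem_span_mono_iff] at hkey
      obtain ⟨t, htS, ht⟩ := hkey
      refine ⟨t, Or.inl htS, le_trans ht ?_⟩
      -- v - e_il ≤ b + e_j - e_i
      intro s
      have h1 := hab s
      have h2 : a' s = a s - (Finsupp.single il 1 : Fin n →₀ ℕ) s := ha'app s
      simp only [Finsupp.tsub_apply, Finsupp.add_apply, hvapp]
      rcases eq_or_ne il s with rfl | e1
      · rw [Finsupp.single_eq_same] at h2 ⊢
        rw [Finsupp.single_eq_of_ne' (ne_of_lt hjil)]
        rcases eq_or_ne i il with e2 | e2
        · have h5 : a' il = b il := by rw [← e2]; exact ha'i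
          rw [e2, Finsupp.single_eq_same]
          omega
        · rw [Finsupp.single_eq_of_ne' e2]
          omega
      · rw [Finsupp.single_eq_of_ne' e1] at h2
        rw [Finsupp.single_eq_of_ne' e1]
        omega


end Pol
end

section
/- Let I ⊂ k[x_1,…,x_n] be Borel fixed with all generators of degree ≤ d, l = ν(I), m the lexicographically largest minimal generator with ν(m) = l, m ≠ x_l, and m_1 = m/x_l = ∏_{i=1}^l x_i^{a_i} with partial sums b_i = a_1 + ⋯ + a_i. Set n̂ = B(m_1) ∈ Ŝ and J = B(I). Then the colon ideal J : n̂ equals the prime ideal ( x_{i, b_i + 1} : 1 ≤ i ≤ l ). -/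
open MvPolynomial CategoryTheory

namespace Pol


section Aux
open Finset

variable {n : ℕ}

lemma psum_zero (a : Fin n →₀ ℕ) : psum a 0 = 0 := by simp [psum]

lemma psum_mono (a : Fin n →₀ ℕ) {s t : ℕ} (h : s ≤ t) : psum a s ≤ psum a t := by
  apply Finset.sum_le_sum_of_subset
  intro j hj
  simp only [mem_filter, mem_univ, true_and] at hj ⊢
  omega

lemma psum_succ (a : Fin n →₀ ℕ) (s : ℕ) (hs : s < n) :
    psum a (s + 1) = psum a s + a ⟨s, hs⟩ := by
  unfold psum
  have hins : Finset.univ.filter (fun j : Fin n => (j : ℕ) < s + 1)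
      = insert (⟨s, hs⟩ : Fin n) (Finset.univ.filter (fun j : Fin n => (j : ℕ) < s)) := by
    ext j
    simp only [mem_insert, mem_filter, mem_univ, true_and, Fin.ext_iff]
    omega
  rw [hins, Finset.sum_insert (by simp)]
  exact Nat.add_comm _ _

lemma psum_succ_ge (a : Fin n →₀ ℕ) (s : ℕ) (hs : n ≤ s) :
    psum a (s + 1) = psum a s := by
  unfold psum
  apply Finset.sum_congr _ (fun _ _ => rfl)
  ext j
  simp only [mem_filter, mem_univ, true_and]
  have := j.isLt
  omega

lemma psum_ge (a : Fin n →₀ ℕ) {s t : ℕ} (hs : n ≤ s) (hst : s ≤ t) :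
    psum a t = psum a s := by
  induction t with
  | zero =>
    have : s = 0 := by omega
    rw [this]
  | succ t ih =>
    rcases Nat.lt_or_ge t s with h | h
    · have : s = t + 1 := by omega
      rw [this]
    · rw [psum_succ_ge a t (by omega), ih h]

lemma psum_add (a b : Fin n →₀ ℕ) (s : ℕ) : psum (a + b) s = psum a s + psum b s := by
  unfold psum
  rw [← Finset.sum_add_distrib]
  exact Finset.sum_congr rfl (fun j _ => by simp)

lemma psum_single (j : Fin n) (m s : ℕ) :
    psum (Finsupp.single j m) s = if (j : ℕ) < s then m else 0 := by
  classical
  unfold psum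
  simp only [Finsupp.single_apply]
  rw [Finset.sum_ite_eq]
  simp

lemma psum_le_of_le {a b : Fin n →₀ ℕ} (h : a ≤ b) (s : ℕ) : psum a s ≤ psum b s :=
  Finset.sum_le_sum (fun j _ => h j)

lemma psum_stab {a : Fin n →₀ ℕ} {r : ℕ} (h : ∀ j ∈ a.support, (j : ℕ) < r) {s : ℕ}
    (hrs : r ≤ s) : psum a s = psum a r := by
  unfold psum
  symm
  apply Finset.sum_subset
  · intro j hj; simp only [mem_filter, mem_univ, true_and] at hj ⊢; omega
  · intro j _ hj
    simp only [mem_filter, mem_univ, true_and] at hj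
    by_contra hne
    have := h j (Finsupp.mem_support_iff.mpr hne)
    omega

lemma degE_eq_psum (a : Fin n →₀ ℕ) : degE a = psum a n := by
  unfold degE psum
  rw [Finsupp.sum]
  apply Finset.sum_subset
  · intro j _; simp
  · intro j _ hj
    exact Finsupp.notMem_support_iff.mp hj

lemma psum_sub_single {a : Fin n →₀ ℕ} {j : Fin n} (h : a j ≠ 0) (s : ℕ) :
    psum (a - Finsupp.single j 1) s + (if (j : ℕ) < s then 1 else 0) = psum a s := by
  have hle : Finsupp.single j 1 ≤ a := by
    rw [Finsupp.single_le_iff]; omega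
  have : (a - Finsupp.single j 1) + Finsupp.single j 1 = a := tsub_add_cancel_of_le hle
  conv_rhs => rw [← this]
  rw [psum_add, psum_single]

lemma eq_of_psum_eq {a b : Fin n →₀ ℕ} (h : ∀ s, s ≤ n → psum a s = psum b s) : a = b := by
  ext j
  have h1 := psum_succ a (j : ℕ) j.isLt
  have h2 := psum_succ b (j : ℕ) j.isLt
  have e1 := h (j : ℕ) (le_of_lt j.isLt)
  have e2 := h ((j : ℕ) + 1) j.isLt
  have : (⟨(j : ℕ), j.isLt⟩ : Fin n) = j := Fin.ext rfl
  rw [this] at h1 h2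
  omega

lemma apply_le_degE (a : Fin n →₀ ℕ) (j : Fin n) : a j ≤ degE a := by
  rw [degE_eq_psum]
  have h1 := psum_succ a (j : ℕ) j.isLt
  have : (⟨(j : ℕ), j.isLt⟩ : Fin n) = j := Fin.ext rfl
  rw [this] at h1
  have := psum_mono a (show (j : ℕ) + 1 ≤ n by omega)
  omega

end Aux
section Aux2
open Finset

variable {σ k : Type} [Field k]

lemma mem_span_monomials_iff (A : Set (σ →₀ ℕ)) (p : MvPolynomial σ k) :
    p ∈ Ideal.span ((fun a => (monomial a 1 : MvPolynomial σ k)) '' A)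
      ↔ ∀ e ∈ p.support, ∃ t ∈ A, t ≤ e := by
  classical
  constructor
  · intro hp
    let K : Ideal (MvPolynomial σ k) :=
      { carrier := {q | ∀ e ∈ q.support, ∃ t ∈ A, t ≤ e}
        zero_mem' := by intro e he; simp at he
        add_mem' := by
          intro x y hx hy e he
          rcases Finset.mem_union.mp (MvPolynomial.support_add he) with h | h
          · exact hx e h
          · exact hy e h
        smul_mem' := by
          intro c x hx e he
          have : e ∈ (c * x).support := by simpa using he
          rcases Finset.mem_add.mp (MvPolynomial.support_mul c x this) with ⟨e1, he1, e2, he2, rfl⟩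
          rcases hx e2 he2 with ⟨t, ht, hle⟩
          exact ⟨t, ht, hle.trans (le_add_self)⟩ }
    have hKspan : Ideal.span ((fun a => (monomial a 1 : MvPolynomial σ k)) '' A) ≤ K := by
      apply Ideal.span_le.mpr
      rintro q ⟨t, ht, rfl⟩
      intro e he
      rw [MvPolynomial.support_monomial] at he
      simp only [if_neg (one_ne_zero : (1:k) ≠ 0)] at he
      rw [Finset.mem_singleton] at he
      exact ⟨t, ht, le_of_eq he.symm⟩
    exact hKspan hp
  · intro h
    rw [p.as_sum]
    apply Ideal.sum_mem
    intro e he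
    rcases h e he with ⟨t, ht, hle⟩
    have : (monomial e (MvPolynomial.coeff e p) : MvPolynomial σ k)
        = monomial (e - t) (MvPolynomial.coeff e p) * monomial t 1 := by
      rw [MvPolynomial.monomial_mul, mul_one, tsub_add_cancel_of_le hle]
    rw [this]
    exact Ideal.mul_mem_left _ _ (Ideal.subset_span ⟨t, ht, rfl⟩)

lemma monomial_one_mem_span_iff (A : Set (σ →₀ ℕ)) (e : σ →₀ ℕ) :
    (monomial e 1 : MvPolynomial σ k) ∈
        Ideal.span ((fun a => (monomial a 1 : MvPolynomial σ k)) '' A)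
      ↔ ∃ t ∈ A, t ≤ e := by
  classical
  rw [mem_span_monomials_iff]
  constructor
  · intro h
    apply h
    rw [MvPolynomial.support_monomial]
    simp [(one_ne_zero : (1:k) ≠ 0)]
  · intro h f hf
    rw [MvPolynomial.support_monomial] at hf
    simp only [if_neg (one_ne_zero : (1:k) ≠ 0), Finset.mem_singleton] at hf
    exact hf ▸ h

lemma mem_of_minGen_le {I : Ideal (MvPolynomial σ k)} {g c : σ →₀ ℕ}
    (hg : (monomial g 1 : MvPolynomial σ k) ∈ I) (hle : g ≤ c) :
    (monomial c 1 : MvPolynomial σ k) ∈ I := by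
  have : (monomial c 1 : MvPolynomial σ k) = monomial (c - g) 1 * monomial g 1 := by
    rw [MvPolynomial.monomial_mul, mul_one, tsub_add_cancel_of_le hle]
  rw [this]
  exact Ideal.mul_mem_left _ _ hg

end Aux2

section Aux3
open Finset

variable {n : ℕ} {k : Type} [Field k]

lemma exists_minGen_le {I : Ideal (MvPolynomial (Fin n) k)} {c : Fin n →₀ ℕ}
    (hc : (monomial c 1 : MvPolynomial (Fin n) k) ∈ I) :
    ∃ g, IsMinGen I g ∧ g ≤ c := by
  classical
  suffices H : ∀ N : ℕ, ∀ c : Fin n →₀ ℕ, degE c ≤ N →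
      (monomial c 1 : MvPolynomial (Fin n) k) ∈ I → ∃ g, IsMinGen I g ∧ g ≤ c from
    H (degE c) c le_rfl hc
  intro N
  induction N with
  | zero =>
    intro c hdeg hc
    refine ⟨c, ⟨hc, ?_⟩, le_rfl⟩
    intro i hi
    have := apply_le_degE c i
    omega
  | succ N ih =>
    intro c hdeg hc
    by_cases hmin : IsMinGen I c
    · exact ⟨c, hmin, le_rfl⟩
    · unfold IsMinGen at hmin
      push_neg at hmin
      rcases hmin hc with ⟨i, hi, hmem⟩
      have hdeg' : degE (c - Finsupp.single i 1) ≤ N := by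
        have h1 := psum_sub_single hi n
        rw [if_pos i.isLt] at h1
        rw [degE_eq_psum] at hdeg ⊢
        omega
      rcases ih _ hdeg' hmem with ⟨g, hg, hle⟩
      exact ⟨g, hg, hle.trans tsub_le_self⟩

theorem borel_domination {I : Ideal (MvPolynomial (Fin n) k)} (hB : IsBorelFixed I)
    {u : Fin n →₀ ℕ} :
    ∀ D : ℕ, ∀ c : Fin n →₀ ℕ, (monomial c 1 : MvPolynomial (Fin n) k) ∈ I →
      (∀ s, psum c s ≤ psum u s) →
      (∑ s ∈ Finset.range (n+1), (psum u s - psum c s)) ≤ D →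
      (monomial u 1 : MvPolynomial (Fin n) k) ∈ I := by
  classical
  intro D
  induction D with
  | zero =>
    intro c hc hdom hsum
    have heq : c = u := by
      apply eq_of_psum_eq
      intro s hs
      have : psum u s - psum c s = 0 := by
        by_contra hne
        have hmem : s ∈ Finset.range (n+1) := by simp; omega
        have h2 : psum u s - psum c s ≤ ∑ s ∈ Finset.range (n+1), (psum u s - psum c s) :=
          Finset.single_le_sum (f := fun s => psum u s - psum c s)
            (fun i _ => Nat.zero_le _) hmem
        omega
      have := hdom s
      omega
    exact heq ▸ hc
  | succ D ih =>
    intro c hc hdom hsum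
    by_cases hceq : c = u
    · exact hceq ▸ hc
    rcases Nat.lt_or_ge (psum c n) (psum u n) with hdeglt | hdegge
    · -- degree case: add a variable
      have hSne : (Finset.univ.filter (fun i : Fin n => c i < u i)).Nonempty := by
        by_contra hemp
        rw [Finset.not_nonempty_iff_eq_empty, Finset.filter_eq_empty_iff] at hemp
        have : psum u n ≤ psum c n := Finset.sum_le_sum (fun j _ => by
          have := hemp (Finset.mem_univ j); omega)
        omega
      set i := (Finset.univ.filter (fun i : Fin n => c i < u i)).max' hSne with hidef
      have hihi : c i < u i := by
        have := Finset.max'_mem _ hSne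
        rw [← hidef] at this
        simpa using this
      have himax : ∀ j : Fin n, i < j → u j ≤ c j := by
        intro j hj
        by_contra hlt
        have : j ∈ Finset.univ.filter (fun i : Fin n => c i < u i) := by simp; omega
        have := Finset.le_max' _ j this
        rw [← hidef] at this
        exact absurd (lt_of_lt_of_le hj this) (lt_irrefl i)
      set c' := c + Finsupp.single i 1 with hc'def
      have hc'mem : (monomial c' 1 : MvPolynomial (Fin n) k) ∈ I := by
        have : (monomial c' 1 : MvPolynomial (Fin n) k)
            = monomial c 1 * monomial (Finsupp.single i 1) 1 := by
          rw [MvPolynomial.monomial_mul, mul_one]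
        rw [this]
        exact Ideal.mul_mem_right _ _ hc
      have hc'psum : ∀ s, psum c' s = psum c s + (if (i:ℕ) < s then 1 else 0) := by
        intro s; rw [hc'def, psum_add, psum_single]
      have htail : ∀ s, (i:ℕ) < s → psum c s < psum u s := by
        intro s hs
        rcases Nat.lt_or_ge s n with hsn | hsn
        · -- psum x n = psum x s + sum over j with s ≤ j
          have key : ∀ x : Fin n →₀ ℕ, psum x n = psum x s +
              ∑ j ∈ Finset.univ.filter (fun j : Fin n => s ≤ (j:ℕ)), x j := by
            intro x
            have huniv : (Finset.univ.filter (fun j : Fin n => (j:ℕ) < n)) = Finset.univ := by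
              ext j; simpa using j.isLt
            have hsplit := Finset.sum_filter_add_sum_filter_not Finset.univ
              (fun j : Fin n => (j:ℕ) < s) (fun j => x j)
            have hneg : Finset.univ.filter (fun j : Fin n => ¬ (j:ℕ) < s)
                = Finset.univ.filter (fun j : Fin n => s ≤ (j:ℕ)) := by
              ext j; simp only [mem_filter, mem_univ, true_and]; omega
            rw [hneg] at hsplit
            unfold psum
            rw [huniv]
            exact hsplit.symm
          have hsumle : ∑ j ∈ Finset.univ.filter (fun j : Fin n => s ≤ (j:ℕ)), u j
              ≤ ∑ j ∈ Finset.univ.filter (fun j : Fin n => s ≤ (j:ℕ)), c j := by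
            apply Finset.sum_le_sum
            intro j hj
            simp only [mem_filter, mem_univ, true_and] at hj
            apply himax
            rw [Fin.lt_def]
            omega
          have k1 := key u; have k2 := key c
          omega
        · have h1 : psum c s = psum c n := psum_ge c (le_refl n) hsn
          have h2 : psum u s = psum u n := psum_ge u (le_refl n) hsn
          omega
      have hdom' : ∀ s, psum c' s ≤ psum u s := by
        intro s
        rw [hc'psum]
        split_ifs with h
        · have := htail s h; omega
        · exact hdom s
      apply ih c' hc'mem hdom'
      have hlt : (∑ s ∈ Finset.range (n+1), (psum u s - psum c' s))
          < ∑ s ∈ Finset.range (n+1), (psum u s - psum c s) := by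
        apply Finset.sum_lt_sum
        · intro s _
          have h1 := hc'psum s
          have h2 := hdom s
          have h4 := hdom' s
          have h3 : psum c s ≤ psum c' s := by rw [h1]; split_ifs <;> omega
          omega
        · refine ⟨n, by simp, ?_⟩
          have := hc'psum n
          rw [if_pos i.isLt] at this
          omega
      omega
    · -- move case
      have hdegeq : psum c n = psum u n := le_antisymm (hdom n) hdegge
      have hTne : ((Finset.range (n+1)).filter (fun t => psum c t < psum u t)).Nonempty := by
        by_contra hemp
        rw [Finset.not_nonempty_iff_eq_empty, Finset.filter_eq_empty_iff] at hemp
        apply hceq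
        apply eq_of_psum_eq
        intro s hs
        have h1 := hemp (show s ∈ Finset.range (n+1) by simp; omega)
        have h2 := hdom s
        omega
      set t := ((Finset.range (n+1)).filter (fun t => psum c t < psum u t)).max' hTne with htdef
      have htlt : psum c t < psum u t ∧ t ≤ n := by
        have := Finset.max'_mem _ hTne
        rw [← htdef] at this
        simp only [mem_filter, Finset.mem_range] at this
        exact ⟨this.2, by omega⟩
      have htmax : ∀ s, t < s → s ≤ n → psum c s = psum u s := by
        intro s hts hsn
        by_contra hne
        have hin : s ∈ (Finset.range (n+1)).filter (fun t => psum c t < psum u t) := by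
          simp only [mem_filter, Finset.mem_range]
          have := hdom s
          constructor
          · omega
          · omega
        have := Finset.le_max' _ s hin
        rw [← htdef] at this
        omega
      have htn : t < n := by
        rcases Nat.lt_or_ge t n with h | h
        · exact h
        · exfalso; have : t = n := by omega
          rw [this] at htlt; omega
      have hct : c ⟨t, htn⟩ ≠ 0 := by
        have h1 := psum_succ c t htn
        have h2 := psum_succ u t htn
        have h3 : psum c (t+1) = psum u (t+1) := by
          rcases Nat.lt_or_ge (t+1) (n+1) with h | h
          · exact htmax (t+1) (by omega) (by omega)
          · omega
        omega
      have hs0ne : ((Finset.range t).filter (fun s => psum u s ≤ psum c s)).Nonempty := by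
        refine ⟨0, ?_⟩
        simp only [mem_filter, Finset.mem_range]
        have : t ≠ 0 := by
          intro h; rw [h] at htlt
          rw [psum_zero, psum_zero] at htlt
          omega
        exact ⟨by omega, by rw [psum_zero, psum_zero]⟩
      set s0 := ((Finset.range t).filter (fun s => psum u s ≤ psum c s)).max' hs0ne with hs0def
      have hs0lt : s0 < t := by
        have := Finset.max'_mem _ hs0ne
        rw [← hs0def] at this
        simp only [mem_filter, Finset.mem_range] at this
        exact this.1
      have hs0strict : ∀ s, s0 < s → s ≤ t → psum c s < psum u s := by
        intro s hs0s hst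
        rcases Nat.lt_or_ge s t with h | h
        · by_contra hge
          have : s ∈ (Finset.range t).filter (fun s => psum u s ≤ psum c s) := by
            simp only [mem_filter, Finset.mem_range]
            exact ⟨h, by omega⟩
          have := Finset.le_max' _ s this
          rw [← hs0def] at this
          omega
        · have : s = t := by omega
          rw [this]; exact htlt.1
      set j : Fin n := ⟨s0, by omega⟩ with hjdef
      set tf : Fin n := ⟨t, htn⟩ with htfdef
      set c' := c + Finsupp.single j 1 - Finsupp.single tf 1 with hc'def
      have hc'mem : (monomial c' 1 : MvPolynomial (Fin n) k) ∈ I :=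
        hB c hc tf j (by rw [hjdef, htfdef]; exact Fin.mk_lt_mk.mpr hs0lt) hct
      have hjtf : j ≠ tf := by
        rw [hjdef, htfdef]
        intro h
        have := Fin.mk.injEq s0 _ t _ ▸ h
        simp only [Fin.mk.injEq] at h
        omega
      have hc'psum : ∀ s, psum c' s + (if t < s then 1 else 0)
          = psum c s + (if s0 < s then 1 else 0) := by
        intro s
        have hne : ((c + Finsupp.single j 1) : Fin n →₀ ℕ) tf ≠ 0 := by
          classical
          rw [Finsupp.add_apply, Finsupp.single_apply, if_neg hjtf]
          omega
        have h1 := psum_sub_single hne s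
        rw [← hc'def] at h1
        rw [psum_add, psum_single] at h1
        have hval1 : (tf:ℕ) = t := rfl
        have hval2 : (j:ℕ) = s0 := rfl
        rw [hval1, hval2] at h1
        exact h1
      have hdom' : ∀ s, psum c' s ≤ psum u s := by
        intro s
        have h1 := hc'psum s
        have h2 := hdom s
        rcases le_or_gt s s0 with h | h
        · rw [if_neg (by omega), if_neg (by omega)] at h1
          omega
        · rcases le_or_gt s t with h' | h'
          · have := hs0strict s h h'
            rw [if_neg (by omega), if_pos h] at h1
            omega
          · rw [if_pos h', if_pos (by omega)] at h1
            omega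
      apply ih c' hc'mem hdom'
      have hlt : (∑ s ∈ Finset.range (n+1), (psum u s - psum c' s))
          < ∑ s ∈ Finset.range (n+1), (psum u s - psum c s) := by
        apply Finset.sum_lt_sum
        · intro s _
          have h1 := hc'psum s
          have h2 := hdom s
          split_ifs at h1 <;> omega
        · refine ⟨t, by simp; omega, ?_⟩
          have h1 := hc'psum t
          rw [if_neg (by omega), if_pos hs0lt] at h1
          have := htlt.1
          omega
      omega

end Aux3
section Aux4
open Finset

variable {n : ℕ} {k : Type} [Field k]

/-- restriction of an exponent vector to the variables of index `< r`. -/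
noncomputable def trunc (V : Fin n →₀ ℕ) (r : ℕ) : Fin n →₀ ℕ :=
  V.filter (fun j => (j : ℕ) < r)

lemma trunc_apply (V : Fin n →₀ ℕ) (r : ℕ) (j : Fin n) :
    trunc V r j = if (j : ℕ) < r then V j else 0 := by
  classical
  rw [trunc, Finsupp.filter_apply]

lemma trunc_ge (V : Fin n →₀ ℕ) {r : ℕ} (h : n ≤ r) : trunc V r = V := by
  ext j
  rw [trunc_apply, if_pos (lt_of_lt_of_le j.isLt h)]

lemma trunc_zero_eq (V : Fin n →₀ ℕ) : trunc V 0 = 0 := by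
  ext j
  rw [trunc_apply, if_neg (by omega)]
  rfl

lemma trunc_succ (V : Fin n →₀ ℕ) (s : ℕ) (hs : s < n) :
    trunc V (s + 1) = trunc V s + Finsupp.single ⟨s, hs⟩ (V ⟨s, hs⟩) := by
  classical
  ext j
  rcases eq_or_ne j ⟨s, hs⟩ with rfl | hne
  · simp [trunc_apply]
  · have hv : (j : ℕ) ≠ s := fun h => hne (Fin.ext h)
    have hne2 : (⟨s, hs⟩ : Fin n) ≠ j := fun h => hne h.symm
    rw [Finsupp.add_apply, trunc_apply, trunc_apply, Finsupp.single_apply, if_neg hne2]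
    split_ifs <;> omega

lemma psum_trunc (V : Fin n →₀ ℕ) (r s : ℕ) :
    psum (trunc V r) s = psum V (min r s) := by
  classical
  unfold psum
  rw [Finset.sum_congr rfl (fun j _ => trunc_apply V r j), ← Finset.sum_filter]
  apply Finset.sum_congr _ (fun _ _ => rfl)
  ext j
  simp only [mem_filter, mem_univ, true_and]
  omega

lemma boxExp_apply {d : ℕ} (a : Fin n →₀ ℕ) (p : Fin n × Fin d) :
    boxExp d a p
      = if psum a (p.1 : ℕ) ≤ (p.2 : ℕ) ∧ (p.2 : ℕ) < psum a ((p.1 : ℕ) + 1) then 1 else 0 := by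
  classical
  unfold boxExp
  rw [Finsupp.finset_sum_apply]
  simp only [Finsupp.single_apply]
  rw [Finset.sum_ite_eq' (Finset.univ.filter _) p (fun _ => 1)]
  simp

lemma strip_minGen {I : Ideal (MvPolynomial (Fin n) k)} (hB : IsBorelFixed I)
    (hne_top : (monomial (0 : Fin n →₀ ℕ) 1 : MvPolynomial (Fin n) k) ∉ I)
    {V : Fin n →₀ ℕ} (hV : (monomial V 1 : MvPolynomial (Fin n) k) ∈ I) :
    ∃ (q : Fin n) (e : ℕ), 1 ≤ e ∧ e ≤ V q ∧
      IsMinGen I (trunc V (q : ℕ) + Finsupp.single q e) := by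
  classical
  have hP : ∃ r, (monomial (trunc V r) 1 : MvPolynomial (Fin n) k) ∈ I :=
    ⟨n, by rw [trunc_ge V le_rfl]; exact hV⟩
  set r := Nat.find hP with hrdef
  have hrspec : (monomial (trunc V r) 1 : MvPolynomial (Fin n) k) ∈ I := Nat.find_spec hP
  have hrle : r ≤ n := Nat.find_le (by rw [trunc_ge V le_rfl]; exact hV)
  have hrpos : 1 ≤ r := by
    rcases Nat.eq_zero_or_pos r with h | h
    · exfalso
      rw [h, trunc_zero_eq] at hrspec
      exact hne_top hrspec
    · exact h
  have hq : r - 1 < n := by omega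
  set q : Fin n := ⟨r - 1, hq⟩ with hqdef
  have hqval : (q : ℕ) = r - 1 := rfl
  have htruncr : trunc V r = trunc V (r - 1) + Finsupp.single q (V q) := by
    have := trunc_succ V (r - 1) hq
    rw [show r - 1 + 1 = r by omega] at this
    exact this
  have hQ : ∃ e, (monomial (trunc V (r - 1) + Finsupp.single q e) 1 :
      MvPolynomial (Fin n) k) ∈ I := ⟨V q, by rw [← htruncr]; exact hrspec⟩
  set e := Nat.find hQ with hedef
  have hespec : (monomial (trunc V (r - 1) + Finsupp.single q e) 1 :
      MvPolynomial (Fin n) k) ∈ I := Nat.find_spec hQ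
  have hele : e ≤ V q := Nat.find_le (by rw [← htruncr]; exact hrspec)
  have hepos : 1 ≤ e := by
    rcases Nat.eq_zero_or_pos e with h | h
    · exfalso
      have := hespec
      rw [h] at this
      simp only [Finsupp.single_zero, add_zero] at this
      exact Nat.find_min hP (show r - 1 < r by omega) this
    · exact h
  set c := trunc V (r - 1) + Finsupp.single q e with hcdef
  have hcq : c q = e := by
    rw [hcdef, Finsupp.add_apply, trunc_apply, Finsupp.single_eq_same,
      if_neg (by rw [hqval]; omega)]
    omega
  have hcother : ∀ v : Fin n, v ≠ q → c v = trunc V (r - 1) v := by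
    intro v hv
    rw [hcdef, Finsupp.add_apply, Finsupp.single_apply, if_neg (fun h => hv h.symm), add_zero]
  have hstripq : c - Finsupp.single q 1 = trunc V (r - 1) + Finsupp.single q (e - 1) := by
    ext v
    rcases eq_or_ne v q with rfl | hv
    · rw [Finsupp.tsub_apply, hcq, Finsupp.single_eq_same, Finsupp.add_apply,
        Finsupp.single_eq_same, trunc_apply, if_neg (by rw [hqval]; omega)]
      omega
    · rw [Finsupp.tsub_apply, hcother v hv, Finsupp.single_apply,
        if_neg (fun h => hv h.symm), Finsupp.add_apply, Finsupp.single_apply,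
        if_neg (fun h => hv h.symm)]
      omega
  have hstripq_notmem : (monomial (c - Finsupp.single q 1) 1 : MvPolynomial (Fin n) k) ∉ I := by
    rw [hstripq]
    exact Nat.find_min hQ (show e - 1 < e by omega)
  have hceq : trunc V (q : ℕ) + Finsupp.single q e = c := by
    rw [hqval]
  refine ⟨q, e, hepos, hele, ?_⟩
  rw [hceq]
  refine ⟨hespec, ?_⟩
  intro v hv
  rcases eq_or_ne v q with rfl | hvq
  · exact hstripq_notmem
  · intro hmem
    apply hstripq_notmem
    have hvval : (v : ℕ) < r - 1 := by
      have := hcother v hvq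
      rw [trunc_apply] at this
      by_contra hge
      rw [if_neg hge] at this
      omega
    have hcv : c v ≠ 0 := hv
    apply borel_domination hB
      (∑ s ∈ Finset.range (n+1), (psum (c - Finsupp.single q 1) s
        - psum (c - Finsupp.single v 1) s)) _ hmem _ le_rfl
    intro s
    have h1 := psum_sub_single hcv s
    have h2 := psum_sub_single (show c q ≠ 0 by omega) s
    have hvq2 : (v:ℕ) < (q:ℕ) := by rw [hqval]; exact hvval
    split_ifs at h1 h2 <;> omega
end Aux4
section Aux5
open Finset

variable {n : ℕ} {k : Type} [Field k]

lemma degE_lt_of_lt {g y : Fin n →₀ ℕ} (h1 : g ≤ y) (h2 : g ≠ y) : degE g < degE y := by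
  rw [degE_eq_psum, degE_eq_psum]
  have hex : ∃ v : Fin n, g v < y v := by
    by_contra hno
    push_neg at hno
    exact h2 (le_antisymm h1 (fun v => hno v))
  rcases hex with ⟨v, hv⟩
  unfold psum
  apply Finset.sum_lt_sum (fun j _ => h1 j)
  exact ⟨v, by simpa using v.isLt, hv⟩

lemma span_X_isPrime {σ : Type} (S : Set σ) :
    (Ideal.span ((fun s => (X s : MvPolynomial σ k)) '' S)).IsPrime := by
  classical
  set P := Ideal.span ((fun s => (X s : MvPolynomial σ k)) '' S) with hPdef
  set f : MvPolynomial σ k →ₐ[k] MvPolynomial σ k :=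
    aeval (fun s => if s ∈ S then 0 else X s) with hfdef
  have hcomp : (Ideal.Quotient.mkₐ k P).comp f = Ideal.Quotient.mkₐ k P := by
    apply MvPolynomial.algHom_ext
    intro s
    simp only [AlgHom.comp_apply, Ideal.Quotient.mkₐ_eq_mk, hfdef, aeval_X]
    by_cases hs : s ∈ S
    · rw [if_pos hs, map_zero]
      symm
      rw [Ideal.Quotient.eq_zero_iff_mem]
      exact Ideal.subset_span ⟨s, hs, rfl⟩
    · rw [if_neg hs]
  have hker : P = RingHom.ker (f.toRingHom) := by
    apply le_antisymm
    · rw [hPdef, Ideal.span_le]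
      rintro w ⟨s, hs, rfl⟩
      simp only [SetLike.mem_coe, RingHom.mem_ker, AlgHom.toRingHom_eq_coe, RingHom.coe_coe,
        hfdef, aeval_X]
      rw [if_pos hs]
    · intro w hw
      have h0 : f w = 0 := hw
      have h1 : Ideal.Quotient.mk P (f w) = Ideal.Quotient.mk P w := by
        have := congrArg (fun g : MvPolynomial σ k →ₐ[k] MvPolynomial σ k ⧸ P => g w) hcomp
        simpa using this
      rw [h0, map_zero] at h1
      rw [← Ideal.Quotient.eq_zero_iff_mem]
      exact h1.symm
  rw [hker]
  exact RingHom.ker_isPrime _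

lemma allowed_key {d : ℕ} (a1 V : Fin n →₀ ℕ) (i q : Fin n) (R e : ℕ)
    (hiR : (i : ℕ) < R)
    (hVsum : ∀ s, s ≤ n →
      psum V s + (if R < s then 1 else 0) = psum a1 s + (if (i : ℕ) < s then 1 else 0))
    (hmidz : ∀ s, (i : ℕ) < s → s < R → s < n → psum a1 (s + 1) = psum a1 s)
    (he1 : 1 ≤ e) (heq : e ≤ V q)
    (hb : psum a1 ((i : ℕ) + 1) < d) :
    boxExp d (trunc V (q : ℕ) + Finsupp.single q e)
      ≤ boxExp d a1 + Finsupp.single (i, (⟨psum a1 ((i : ℕ) + 1), hb⟩ : Fin d)) 1 := by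
  classical
  rw [Finsupp.le_def]
  rintro ⟨j, t⟩
  set c := trunc V (q : ℕ) + Finsupp.single q e with hcdef
  rw [boxExp_apply, Finsupp.add_apply, boxExp_apply, Finsupp.single_apply]
  simp only [show ((j,t).1) = j from rfl, show ((j,t).2) = t from rfl]
  have hc : ∀ s, psum c s = psum V (min (q : ℕ) s) + (if (q : ℕ) < s then e else 0) := by
    intro s
    rw [hcdef, psum_add, psum_trunc, psum_single]
  by_cases hcond : psum c (j : ℕ) ≤ (t : ℕ) ∧ (t : ℕ) < psum c ((j : ℕ) + 1)
  swap
  · rw [if_neg hcond]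
    exact Nat.zero_le _
  rw [if_pos hcond]
  have hJ : (j : ℕ) < n := j.isLt
  have hQ : (q : ℕ) < n := q.isLt
  have hIv : (i : ℕ) < n := i.isLt
  have hgoal : (psum a1 (j : ℕ) ≤ (t : ℕ) ∧ (t : ℕ) < psum a1 ((j : ℕ) + 1))
      ∨ ((i : ℕ) = (j : ℕ) ∧ psum a1 ((i : ℕ) + 1) = (t : ℕ)) := by
    have hcJ := hc (j : ℕ)
    have hcJ1 := hc ((j : ℕ) + 1)
    rcases lt_trichotomy (j : ℕ) (q : ℕ) with hJQ | hJQ | hJQ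
    · -- j < q
      rw [min_eq_right (by omega), if_neg (by omega)] at hcJ
      rw [min_eq_right (by omega), if_neg (by omega)] at hcJ1
      have hVJ := hVsum (j : ℕ) (by omega)
      have hVJ1 := hVsum ((j : ℕ) + 1) (by omega)
      rcases lt_trichotomy (j : ℕ) (i : ℕ) with hJI | hJI | hJI
      · split_ifs at hVJ hVJ1 <;> omega
      · have hij : i = j := Fin.ext hJI.symm
        subst hij
        split_ifs at hVJ hVJ1 <;> omega
      · rcases em ((j : ℕ) < R) with hm | hm
        · have hx1 := hmidz _ hJI hm hJ
          split_ifs at hVJ hVJ1 <;> omega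
        · split_ifs at hVJ hVJ1 <;> omega
    · -- j = q
      have hjq : j = q := Fin.ext hJQ
      subst hjq
      rw [min_self, if_neg (by omega)] at hcJ
      rw [min_eq_left (by omega), if_pos (by omega)] at hcJ1
      have hVQ := hVsum (j : ℕ) (by omega)
      have hVQ1 := hVsum ((j : ℕ) + 1) (by omega)
      have hVqval : psum V ((j : ℕ) + 1) = psum V (j : ℕ) + V j := by
        have := psum_succ V (j : ℕ) hJ
        rw [show (⟨(j : ℕ), hJ⟩ : Fin n) = j from Fin.ext rfl] at this
        exact this
      rcases lt_trichotomy (j : ℕ) (i : ℕ) with hJI | hJI | hJI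
      · split_ifs at hVQ hVQ1 <;> omega
      · have hij : i = j := Fin.ext hJI.symm
        subst hij
        split_ifs at hVQ hVQ1 <;> omega
      · rcases em ((j : ℕ) < R) with hm | hm
        · have hx2 := hmidz _ hJI hm hJ
          split_ifs at hVQ hVQ1 <;> omega
        · split_ifs at hVQ hVQ1 <;> omega
    · -- j > q : empty block
      rw [min_eq_left (by omega), if_pos (by omega)] at hcJ
      rw [min_eq_left (by omega), if_pos (by omega)] at hcJ1
      omega
  rcases hgoal with hg | hg
  · rw [if_pos hg]
    exact Nat.le_add_right 1 _
  · have hp : (i, (⟨psum a1 ((i : ℕ) + 1), hb⟩ : Fin d)) = (j, t) := by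
      rw [Prod.ext_iff]
      exact ⟨Fin.ext hg.1, Fin.ext hg.2⟩
    rw [if_pos hp]
    exact Nat.le_add_left 1 _

end Aux5

/-- Claim 2: with `n̂ = B(m_1)`, `m_1 = m/x_l = ∏ x_i^{a_i}` and partial
sums `b_i`, the colon ideal `B(I) : n̂` equals the prime ideal `(x_{i, b_i+1} ∣ i ≤ l)`. -/
theorem colon_boxIdeal_eq_prime (n d : ℕ) (k : Type) [Field k]
    (I : Ideal (MvPolynomial (Fin n) k)) (hmon : IsMonomialIdeal I) (hB : IsBorelFixed I)
    (hnp : ¬ I.IsPrime) (hd : ∀ a : Fin n →₀ ℕ, IsMinGen I a → degE a ≤ d)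
    (a : Fin n →₀ ℕ) (il : Fin n) (ha : IsMinGen I a) (hail : a il ≠ 0)
    (hasupp : ∀ j ∈ a.support, j ≤ il)
    (hnuI : ∀ c : Fin n →₀ ℕ, IsMinGen I c → ∀ j ∈ c.support, j ≤ il)
    (hmax : ∀ c : Fin n →₀ ℕ, IsMinGen I c → c il ≠ 0 → c ≠ a → lexLT c a)
    (hne : a ≠ Finsupp.single il 1) :
    (boxIdeal d I).colon (Ideal.span {(monomial (boxExp d (a - Finsupp.single il 1)) 1 :
        MvPolynomial (Fin n × Fin d) k)})
      = Ideal.span {q : MvPolynomial (Fin n × Fin d) k | ∃ i : Fin n, i ≤ il ∧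
          ∃ h : psum (a - Finsupp.single il 1) ((i : ℕ) + 1) < d,
          q = X (i, (⟨psum (a - Finsupp.single il 1) ((i : ℕ) + 1), h⟩ : Fin d))}
      ∧ (Ideal.span {q : MvPolynomial (Fin n × Fin d) k | ∃ i : Fin n, i ≤ il ∧
          ∃ h : psum (a - Finsupp.single il 1) ((i : ℕ) + 1) < d,
          q = X (i, (⟨psum (a - Finsupp.single il 1) ((i : ℕ) + 1), h⟩ : Fin d))}).IsPrime := by
  classical
  set a1 : Fin n →₀ ℕ := a - Finsupp.single il 1 with ha1def
  -- basic facts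
  have hsle : Finsupp.single il 1 ≤ a := Finsupp.single_le_iff.mpr (by omega)
  have ha1add : a1 + Finsupp.single il 1 = a := by rw [ha1def]; exact tsub_add_cancel_of_le hsle
  have hpa : ∀ s, psum a s = psum a1 s + (if (il : ℕ) < s then 1 else 0) := by
    intro s
    conv_lhs => rw [← ha1add]
    rw [psum_add, psum_single]
  have ha1il : a1 il = a il - 1 := by
    rw [ha1def, Finsupp.tsub_apply, Finsupp.single_eq_same]
  have ha1le : a1 ≤ a := by rw [ha1def]; exact tsub_le_self
  have hsuppaval : ∀ j : Fin n, a j ≠ 0 → (j : ℕ) < (il : ℕ) + 1 := by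
    intro j hj
    have := hasupp j (Finsupp.mem_support_iff.mpr hj)
    rw [Fin.le_def] at this
    omega
  have ha1suppval : ∀ j : Fin n, a1 j ≠ 0 → (j : ℕ) < (il : ℕ) + 1 := by
    intro j hj
    have h1 := ha1le j
    exact hsuppaval j (by omega)
  have ha1notmem : (monomial a1 1 : MvPolynomial (Fin n) k) ∉ I := by
    rw [ha1def]; exact ha.2 il hail
  have hne_top : (monomial (0 : Fin n →₀ ℕ) 1 : MvPolynomial (Fin n) k) ∉ I := by
    intro h
    exact ha1notmem (mem_of_minGen_le h zero_le)
  have hdega : degE a ≤ d := hd a ha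
  have hiln : (il : ℕ) + 1 ≤ n := il.isLt
  have hdega1 : psum a1 ((il : ℕ) + 1) + 1 = degE a := by
    rw [degE_eq_psum]
    have h1 : psum a n = psum a ((il : ℕ) + 1) :=
      psum_stab (fun j hj => hsuppaval j (Finsupp.mem_support_iff.mp hj)) hiln
    have h2 := hpa ((il : ℕ) + 1)
    rw [if_pos (by omega)] at h2
    omega
  have hbd : ∀ i : Fin n, psum a1 ((i : ℕ) + 1) < d := by
    intro i
    have h1 : psum a1 ((i : ℕ) + 1) ≤ psum a1 ((il : ℕ) + 1) := by
      rcases le_or_gt ((i : ℕ) + 1) ((il : ℕ) + 1) with h | h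
      · exact psum_mono a1 h
      · rw [psum_stab (fun j hj => ha1suppval j (Finsupp.mem_support_iff.mp hj))
          (show (il : ℕ) + 1 ≤ (i : ℕ) + 1 by omega)]
    have h2 := apply_le_degE a il
    omega
  -- membership criteria
  have hJgen : boxIdeal d I
      = Ideal.span ((fun e => (monomial e 1 : MvPolynomial (Fin n × Fin d) k)) ''
        ((fun c => boxExp d c) '' {c | IsMinGen I c})) := by
    unfold boxIdeal
    congr 1
    ext w
    constructor
    · rintro ⟨c, hc, rfl⟩
      exact ⟨boxExp d c, ⟨c, hc, rfl⟩, rfl⟩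
    · rintro ⟨e, ⟨c, hc, rfl⟩, rfl⟩
      exact ⟨c, hc, rfl⟩
  have hJmem : ∀ w : (Fin n × Fin d) →₀ ℕ,
      ((monomial w 1 : MvPolynomial (Fin n × Fin d) k) ∈ boxIdeal d I ↔
        ∃ c, IsMinGen I c ∧ boxExp d c ≤ w) := by
    intro w
    rw [hJgen, monomial_one_mem_span_iff]
    constructor
    · rintro ⟨e, ⟨c, hc, rfl⟩, hle⟩
      exact ⟨c, hc, hle⟩
    · rintro ⟨c, hc, hle⟩
      exact ⟨boxExp d c, ⟨c, hc, rfl⟩, hle⟩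
  -- the claim: every minimal generator's box meets a special point
  have hclaim : ∀ c, IsMinGen I c → ∃ i : Fin n, i ≤ il ∧
      psum c (i : ℕ) ≤ psum a1 ((i : ℕ) + 1) ∧ psum a1 ((i : ℕ) + 1) < psum c ((i : ℕ) + 1) := by
    intro c hcmin
    by_contra hno
    push_neg at hno
    apply ha1notmem
    have hsuppc : ∀ j ∈ c.support, (j : ℕ) < (il : ℕ) + 1 := by
      intro j hj
      have := hnuI c hcmin j hj
      rw [Fin.le_def] at this
      omega
    have hnoN : ∀ s : ℕ, s < (il : ℕ) + 1 →
        psum c s ≤ psum a1 (s + 1) → psum c (s + 1) ≤ psum a1 (s + 1) := by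
      intro s hs hle
      exact hno ⟨s, by omega⟩ (by rw [Fin.le_def]; exact (show s ≤ (il : ℕ) by omega)) hle
    have hstep : ∀ s : ℕ, s ≤ (il : ℕ) → psum c (s + 1) ≤ psum a1 (s + 1) := by
      intro s
      induction s with
      | zero =>
        intro hs
        exact hnoN 0 (by omega) (by rw [psum_zero]; omega)
      | succ s ih =>
        intro hs
        have h1 := ih (by omega)
        have h2 := psum_mono a1 (show s + 1 ≤ s + 1 + 1 by omega)
        exact hnoN (s + 1) (by omega) (by omega)
    apply borel_domination hB
      (∑ s ∈ Finset.range (n + 1), (psum a1 s - psum c s)) c hcmin.1 ?_ le_rfl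
    intro s
    match s with
    | 0 => rw [psum_zero, psum_zero]
    | (s' + 1) =>
      rcases le_or_gt s' (il : ℕ) with h | h
      · exact hstep s' h
      · have h1 : psum c (s' + 1) = psum c ((il : ℕ) + 1) := psum_stab hsuppc (by omega)
        have h2 : psum a1 (s' + 1) = psum a1 ((il : ℕ) + 1) :=
          psum_stab (fun j hj => ha1suppval j (Finsupp.mem_support_iff.mp hj)) (by omega)
        have h3 := hstep (il : ℕ) le_rfl
        omega
  -- witnesses for the ⊇ direction
  have hwitness : ∀ i : Fin n, i ≤ il → ∃ cgen, IsMinGen I cgen ∧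
      boxExp d cgen ≤ boxExp d a1
        + Finsupp.single (i, (⟨psum a1 ((i : ℕ) + 1), hbd i⟩ : Fin d)) 1 := by
    intro i hiil
    by_cases hmid : ∃ ρ : Fin n, (i : ℕ) < (ρ : ℕ) ∧ a1 ρ ≠ 0
    · -- middle-support case
      obtain ⟨ρ, ⟨hiρ, hρne⟩, hρmin⟩ : ∃ ρ : Fin n, ((i : ℕ) < (ρ : ℕ) ∧ a1 ρ ≠ 0) ∧
          ∀ j : Fin n, (i : ℕ) < (j : ℕ) → a1 j ≠ 0 → (ρ : ℕ) ≤ (j : ℕ) := by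
        set S := Finset.univ.filter (fun j : Fin n => (i : ℕ) < (j : ℕ) ∧ a1 j ≠ 0) with hS
        have hSne : S.Nonempty := by
          rcases hmid with ⟨ρ, h1, h2⟩
          exact ⟨ρ, Finset.mem_filter.mpr ⟨Finset.mem_univ ρ, h1, h2⟩⟩
        refine ⟨S.min' hSne, ?_, ?_⟩
        · exact (Finset.mem_filter.mp (Finset.min'_mem S hSne)).2
        · intro j h1 h2
          have := Finset.min'_le S j (Finset.mem_filter.mpr ⟨Finset.mem_univ j, h1, h2⟩)
          rw [Fin.le_def] at this
          exact this
      have hρil : (ρ : ℕ) < (il : ℕ) + 1 := ha1suppval ρ hρne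
      have haρ : a ρ ≠ 0 := by
        have := ha1le ρ
        omega
      have hiρF : i < ρ := by rw [Fin.lt_def]; exact hiρ
      have hiil' : (i : ℕ) < (il : ℕ) := by omega
      have hine : i ≠ il := by
        intro h
        rw [h] at hiil'
        omega
      set y := a + Finsupp.single i 1 - Finsupp.single ρ 1 with hydef
      have hy : (monomial y 1 : MvPolynomial (Fin n) k) ∈ I := hB a ha.1 ρ i hiρF haρ
      have hρlea : Finsupp.single ρ 1 ≤ a + Finsupp.single i 1 := by
        rw [Finsupp.single_le_iff, Finsupp.add_apply]
        omega
      have hyadd : y + Finsupp.single ρ 1 = a + Finsupp.single i 1 :=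
        tsub_add_cancel_of_le hρlea
      have hyval : ∀ v, y v + (if ρ = v then 1 else 0) = a v + (if i = v then 1 else 0) := by
        intro v
        have := congrArg (fun f : Fin n →₀ ℕ => f v) hyadd
        simpa [Finsupp.add_apply, Finsupp.single_apply] using this
      have hiρne : i ≠ ρ := by
        intro h
        rw [h] at hiρ
        omega
      have hyil : y il ≠ 0 := by
        have h1 := hyval il
        rw [if_neg hine] at h1
        rcases eq_or_ne ρ il with rfl | hρnee
        · rw [if_pos rfl] at h1
          omega
        · rw [if_neg hρnee] at h1
          omega
      set V := a1 + Finsupp.single i 1 - Finsupp.single ρ 1 with hVdef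
      have ha1ρ : a1 ρ ≠ 0 := hρne
      have hρleV : Finsupp.single ρ 1 ≤ a1 + Finsupp.single i 1 := by
        rw [Finsupp.single_le_iff, Finsupp.add_apply]
        omega
      have hVadd : V + Finsupp.single ρ 1 = a1 + Finsupp.single i 1 :=
        tsub_add_cancel_of_le hρleV
      have hVsum : ∀ s, psum V s + (if (ρ : ℕ) < s then 1 else 0)
          = psum a1 s + (if (i : ℕ) < s then 1 else 0) := by
        intro s
        have := congrArg (fun f : Fin n →₀ ℕ => psum f s) hVadd
        simp only [psum_add, psum_single] at this
        exact this
      have hyV : ∀ s, psum y s + (if (ρ : ℕ) < s then 1 else 0)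
          = psum a s + (if (i : ℕ) < s then 1 else 0) := by
        intro s
        have := congrArg (fun f : Fin n →₀ ℕ => psum f s) hyadd
        simp only [psum_add, psum_single] at this
        exact this
      have hVmem : (monomial V 1 : MvPolynomial (Fin n) k) ∈ I := by
        obtain ⟨g, hgmin, hgle⟩ := exists_minGen_le hy
        by_cases hgy : g = y
        · exfalso
          rw [hgy] at hgmin
          have hya : y ≠ a := by
            intro h
            have h1 := hyval ρ
            rw [if_pos rfl, if_neg hiρne, h] at h1
            omega
          rcases hmax y hgmin hyil hya with ⟨s, hs1, hs2⟩
          have hsρ : s = ρ := by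
            by_contra hsρ
            have h1 := hyval s
            have hnif : ¬ (ρ = s) := fun h => hsρ h.symm
            rw [if_neg hnif] at h1
            split_ifs at h1 <;> omega
          have h2 := hs2 i (hsρ ▸ hiρF)
          have h3 := hyval i
          have hnif2 : ¬ (ρ = i) := fun h => hiρne h.symm
          rw [if_neg hnif2, if_pos rfl] at h3
          omega
        · apply borel_domination hB
            (∑ s ∈ Finset.range (n + 1), (psum V s - psum g s)) g hgmin.1 ?_ le_rfl
          intro s
          have hgley := psum_le_of_le hgle s
          have hys := hyV s
          have hVs := hVsum s
          rcases le_or_gt s (il : ℕ) with hsle | hslt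
          · have hpas := hpa s
            rw [if_neg (by omega)] at hpas
            omega
          · have hsuppg : ∀ jj ∈ g.support, (jj : ℕ) < (il : ℕ) + 1 := by
              intro jj hjj
              have := hnuI g hgmin jj hjj
              rw [Fin.le_def] at this
              omega
            have hsuppy : ∀ jj ∈ y.support, (jj : ℕ) < (il : ℕ) + 1 := by
              intro jj hjj
              have h1 := hyval jj
              have h2 : y jj ≠ 0 := Finsupp.mem_support_iff.mp hjj
              rcases eq_or_ne jj i with rfl | hjine
              · omega
              · apply hsuppaval
                have hnif : ¬ (i = jj) := fun h => hjine h.symm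
                rw [if_neg hnif] at h1
                split_ifs at h1 <;> omega
            have h1 : psum g s = psum g ((il : ℕ) + 1) := psum_stab hsuppg (by omega)
            have h2 : psum g n = psum g ((il : ℕ) + 1) := psum_stab hsuppg hiln
            have h3 : psum y s = psum y ((il : ℕ) + 1) := psum_stab hsuppy (by omega)
            have h4 : psum y n = psum y ((il : ℕ) + 1) := psum_stab hsuppy hiln
            have hdeg : degE g < degE y := degE_lt_of_lt hgle hgy
            rw [degE_eq_psum, degE_eq_psum] at hdeg
            have h5 := hyV s
            have h6 := hVsum s
            have h7 := hpa s
            rw [if_pos (by omega)] at h7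
            omega
      obtain ⟨qv, ev, he1, heq, hcmin⟩ := strip_minGen hB hne_top hVmem
      refine ⟨_, hcmin, ?_⟩
      apply allowed_key a1 V i qv (ρ : ℕ) ev hiρ ?_ ?_ he1 heq (hbd i)
      · intro s _
        exact hVsum s
      · intro s h1 h2 h3
        have hz : a1 ⟨s, h3⟩ = 0 := by
          by_contra hnz
          have := hρmin ⟨s, h3⟩ h1 hnz
          simp at this
          omega
        rw [psum_succ a1 s h3, hz, add_zero]
    · -- no middle support
      push_neg at hmid
      set V := a1 + Finsupp.single i 1 with hVdef
      have hVmem : (monomial V 1 : MvPolynomial (Fin n) k) ∈ I := by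
        rcases eq_or_lt_of_le hiil with heqq | hlt
        · have hVa : V = a := by rw [hVdef, heqq, ha1add]
          rw [hVa]
          exact ha.1
        · have hmem := hB a ha.1 il i hlt hail
          have heq2 : a + Finsupp.single i 1 - Finsupp.single il 1 = V := by
            rw [hVdef, ha1def, add_comm a (Finsupp.single i 1),
              add_tsub_assoc_of_le hsle, add_comm]
          rw [← heq2]
          exact hmem
      obtain ⟨qv, ev, he1, heq, hcmin⟩ := strip_minGen hB hne_top hVmem
      refine ⟨_, hcmin, ?_⟩
      apply allowed_key a1 V i qv n ev i.isLt ?_ ?_ he1 heq (hbd i)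
      · intro s hs
        have hnn : ¬ (n < s) := by omega
        rw [if_neg hnn, hVdef, psum_add, psum_single, add_zero]
      · intro s h1 h2 h3
        have hz : a1 ⟨s, h3⟩ = 0 := hmid ⟨s, h3⟩ h1
        rw [psum_succ a1 s h3, hz, add_zero]
  -- the two parts
  constructor
  · apply le_antisymm
    · -- colon ⊆ P
      intro pp hpp
      rw [Ideal.mem_colon_span_singleton] at hpp
      have hPsup : Ideal.span ((fun e => (monomial e 1 : MvPolynomial (Fin n × Fin d) k)) ''
          ((fun p : Fin n × Fin d => Finsupp.single p 1) ''
            {p : Fin n × Fin d | p.1 ≤ il ∧ (p.2 : ℕ) = psum a1 (((p.1 : Fin n) : ℕ) + 1)}))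
          ≤ Ideal.span {q : MvPolynomial (Fin n × Fin d) k | ∃ i : Fin n, i ≤ il ∧
            ∃ h : psum a1 ((i : ℕ) + 1) < d,
            q = X (i, (⟨psum a1 ((i : ℕ) + 1), h⟩ : Fin d))} := by
        apply Ideal.span_mono
        rintro w ⟨e, ⟨⟨p1, p2⟩, ⟨hp1, hp2⟩, rfl⟩, rfl⟩
        have hp2d : psum a1 ((p1 : ℕ) + 1) < d := by rw [← hp2]; exact p2.isLt
        refine ⟨p1, hp1, hp2d, ?_⟩
        have hpe : ((p1, p2) : Fin n × Fin d)
            = (p1, (⟨psum a1 ((p1 : ℕ) + 1), hp2d⟩ : Fin d)) := Prod.ext rfl (Fin.ext hp2)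
        rw [show (X (p1, (⟨psum a1 ((p1 : ℕ) + 1), hp2d⟩ : Fin d)) :
            MvPolynomial (Fin n × Fin d) k)
          = monomial (Finsupp.single
              ((p1, (⟨psum a1 ((p1 : ℕ) + 1), hp2d⟩ : Fin d)) : Fin n × Fin d) 1) 1 from rfl]
        rw [← hpe]
      apply hPsup
      rw [mem_span_monomials_iff]
      intro w hw
      have hcoeff := MvPolynomial.coeff_mul_monomial w (boxExp d a1) 1 pp
      have hsupp2 : (w + boxExp d a1)
          ∈ (pp * (monomial (boxExp d a1) 1 : MvPolynomial (Fin n × Fin d) k)).support := by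
        rw [MvPolynomial.mem_support_iff, hcoeff, mul_one]
        exact MvPolynomial.mem_support_iff.mp hw
      rw [hJgen] at hpp
      have hhh := (mem_span_monomials_iff _ _).mp hpp _ hsupp2
      rcases hhh with ⟨t, ⟨cg, hcg, rfl⟩, hle2⟩
      rcases hclaim cg hcg with ⟨iw, hiwle, hcl1, hcl2⟩
      refine ⟨_, ⟨((iw, (⟨psum a1 ((iw : ℕ) + 1), hbd iw⟩ : Fin d)) : Fin n × Fin d),
        ⟨hiwle, rfl⟩, rfl⟩, ?_⟩
      rw [Finsupp.single_le_iff]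
      set pt : Fin n × Fin d := (iw, (⟨psum a1 ((iw : ℕ) + 1), hbd iw⟩ : Fin d)) with hptdef
      have hptv1 : ((pt.1 : Fin n) : ℕ) = (iw : ℕ) := rfl
      have hptv2 : ((pt.2 : Fin d) : ℕ) = psum a1 ((iw : ℕ) + 1) := rfl
      have h1 : boxExp d cg pt = 1 := by
        rw [boxExp_apply, hptv1, hptv2, if_pos ⟨hcl1, hcl2⟩]
      have h2 : boxExp d a1 pt = 0 := by
        rw [boxExp_apply, hptv1, hptv2, if_neg]
        rintro ⟨x1, x2⟩
        omega
      have h3 := hle2 pt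
      rw [Finsupp.add_apply, h1, h2] at h3
      omega
    · -- P ⊆ colon
      rw [Ideal.span_le]
      rintro w ⟨i, hiil, hb, rfl⟩
      rw [SetLike.mem_coe, Ideal.mem_colon_span_singleton]
      have hXeq : (X (i, (⟨psum a1 ((i : ℕ) + 1), hb⟩ : Fin d)) :
            MvPolynomial (Fin n × Fin d) k) * monomial (boxExp d a1) 1
          = monomial (boxExp d a1
              + Finsupp.single (i, (⟨psum a1 ((i : ℕ) + 1), hb⟩ : Fin d)) 1) 1 := by
        rw [show (X (i, (⟨psum a1 ((i : ℕ) + 1), hb⟩ : Fin d)) :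
            MvPolynomial (Fin n × Fin d) k)
          = monomial (Finsupp.single (i, (⟨psum a1 ((i : ℕ) + 1), hb⟩ : Fin d)) 1) 1 from rfl]
        rw [MvPolynomial.monomial_mul, mul_one, add_comm]
      rw [hXeq, hJmem]
      obtain ⟨cgen, hcmin, hle⟩ := hwitness i hiil
      exact ⟨cgen, hcmin, hle⟩
  · -- primality
    have hset : {q : MvPolynomial (Fin n × Fin d) k | ∃ i : Fin n, i ≤ il ∧
          ∃ h : psum a1 ((i : ℕ) + 1) < d,
          q = X (i, (⟨psum a1 ((i : ℕ) + 1), h⟩ : Fin d))}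
        = (fun s => (X s : MvPolynomial (Fin n × Fin d) k)) ''
          {p : Fin n × Fin d | p.1 ≤ il ∧ (p.2 : ℕ) = psum a1 (((p.1 : Fin n) : ℕ) + 1)} := by
      ext w
      constructor
      · rintro ⟨i, hiil, hb, rfl⟩
        exact ⟨(i, ⟨psum a1 ((i : ℕ) + 1), hb⟩), ⟨hiil, rfl⟩, rfl⟩
      · rintro ⟨⟨p1, p2⟩, ⟨hp1, hp2⟩, rfl⟩
        refine ⟨p1, hp1, by rw [← hp2]; exact p2.isLt, ?_⟩
        congr 1
        exact Prod.ext rfl (Fin.ext hp2)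
    rw [hset]
    exact span_X_isPrime _

end Pol
end

section
/- If I ⊂ k[x_1,…,x_n] is a Borel fixed monomial ideal with all minimal generators of degree ≤ d, then every associated prime of Ŝ/B(I) has the form ( x_{i, c_i} : 1 ≤ i ≤ m ) for some m and some integers c_1 ≤ c_2 ≤ ⋯ ≤ c_m. -/
open MvPolynomial CategoryTheory

namespace Pol


/-- `Ext^i_R(M, R)` as an `R`-module. -/
noncomputable def ExtMod (R : Type) [CommRing R] (M : Type) [AddCommGroup M] [Module R M]
    (i : ℕ) : ModuleCat R :=
  ((Ext R (ModuleCat R) i).obj (Opposite.op (ModuleCat.of R M))).obj (ModuleCat.of R R)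

/-- The depth of `M` with respect to the ideal `J`: the supremum of lengths of
weakly regular sequences on `M` contained in `J`. -/
noncomputable def moduleDepth {R : Type} [CommRing R] (J : Ideal R) (M : Type)
    [AddCommGroup M] [Module R M] : ℕ∞ :=
  sSup {c : ℕ∞ | ∃ rs : List R, (rs.length : ℕ∞) = c ∧ (∀ r ∈ rs, r ∈ J) ∧
    RingTheory.Sequence.IsWeaklyRegular M rs}

/-- The (Krull) dimension of a module, i.e. the Krull dimension of its support. -/
noncomputable def moduleDim (R : Type) [CommRing R] (M : Type) [AddCommGroup M] [Module R M] :
    WithBot ℕ∞ :=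
  Order.krullDim (Module.support R M)

/-- A module over a polynomial ring is Cohen–Macaulay of dimension `i` if its depth with
respect to the irrelevant maximal ideal and its dimension both equal `i`. -/
def IsCMofDim (σ k : Type) [Field k] (M : Type) [AddCommGroup M]
    [Module (MvPolynomial σ k) M] (i : ℕ) : Prop :=
  moduleDepth (Ideal.span (Set.range (X : σ → MvPolynomial σ k))) M = (i : ℕ∞) ∧
    moduleDim (MvPolynomial σ k) M = (i : WithBot ℕ∞)

/-- A module `M` over `S = k[x_s : s ∈ σ]` (with `n = #σ`) is sequentially Cohen–Macaulay
if for each `i`, `Ext_S^{n-i}(M, S)` is zero or Cohen–Macaulay of dimension `i`. -/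
def IsSeqCM (σ k : Type) [Fintype σ] [Field k] (M : Type) [AddCommGroup M]
    [Module (MvPolynomial σ k) M] : Prop :=
  ∀ i : ℕ, i ≤ Fintype.card σ →
    Subsingleton (ExtMod (MvPolynomial σ k) M (Fintype.card σ - i)) ∨
      IsCMofDim σ k (ExtMod (MvPolynomial σ k) M (Fintype.card σ - i)) i

/-- A pretty clean filtration (Herzog–Popescu): a prime filtration
`0 = M_0 ⊂ ⋯ ⊂ M_t = M` with `M_i/M_{i-1} ≅ R/p_i` such that `i < j` and `p_i ⊆ p_j`
imply `p_i = p_j`. -/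
def HasPrettyCleanFiltration (R : Type) [CommRing R] (M : Type) [AddCommGroup M]
    [Module R M] : Prop :=
  ∃ (t : ℕ) (Mf : ℕ → Submodule R M) (p : ℕ → Ideal R),
    Mf 0 = ⊥ ∧ Mf t = ⊤ ∧ (∀ i, Mf i ≤ Mf (i + 1)) ∧
    (∀ i < t, (p i).IsPrime ∧
      Nonempty ((↥(Mf (i + 1)) ⧸ Submodule.comap (Mf (i + 1)).subtype (Mf i)) ≃ₗ[R] R ⧸ p i)) ∧
    (∀ i j, i < j → j < t → p i ≤ p j → p i = p j)

/-- `β` is the table of graded Betti numbers of the homogeneous ideal `I`: there is a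
minimal graded free resolution `⋯ → F_1 → F_0 → I → 0` with
`F_i = ⊕_j S(-j)^{β i j}`.  Minimality and gradedness are expressed through the matrix
entries of the differentials: the entry from a generator of shift `j'` to a generator of
shift `j` is homogeneous of degree `j' - j`, and vanishes unless `j' > j`. -/
def IsBettiTable {σ k : Type} [Field k] (I : Ideal (MvPolynomial σ k))
    (β : ℕ → ℕ → ℕ) : Prop :=
  ∃ (d : ∀ i : ℕ, ((Σ j : ℕ, Fin (β (i + 1) j)) →₀ MvPolynomial σ k) →ₗ[MvPolynomial σ k]
        ((Σ j : ℕ, Fin (β i j)) →₀ MvPolynomial σ k))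
    (ε : ((Σ j : ℕ, Fin (β 0 j)) →₀ MvPolynomial σ k) →ₗ[MvPolynomial σ k] MvPolynomial σ k),
    LinearMap.range ε = (I : Submodule (MvPolynomial σ k) (MvPolynomial σ k)) ∧
    (∀ b : Σ j : ℕ, Fin (β 0 j), (ε (Finsupp.single b 1)).IsHomogeneous b.1) ∧
    LinearMap.ker ε = LinearMap.range (d 0) ∧
    (∀ i, LinearMap.ker (d i) = LinearMap.range (d (i + 1))) ∧
    (∀ i (b : Σ j : ℕ, Fin (β (i + 1) j)) (c : Σ j : ℕ, Fin (β i j)),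
      (c.1 < b.1 → ((d i (Finsupp.single b 1)) c).IsHomogeneous (b.1 - c.1)) ∧
      (¬ c.1 < b.1 → (d i (Finsupp.single b 1)) c = 0))

namespace Aux

variable {n : ℕ}

lemma psum_zero (a : Fin n →₀ ℕ) : psum a 0 = 0 := by
  simp [psum]

lemma psum_mono (a : Fin n →₀ ℕ) {i j : ℕ} (h : i ≤ j) : psum a i ≤ psum a j := by
  apply Finset.sum_le_sum_of_subset
  intro x hx
  simp only [Finset.mem_filter, Finset.mem_univ, true_and] at hx ⊢
  omega

lemma psum_succ (a : Fin n →₀ ℕ) {i : ℕ} (h : i < n) :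
    psum a (i + 1) = psum a i + a ⟨i, h⟩ := by
  unfold psum
  have hset : Finset.univ.filter (fun j : Fin n => (j : ℕ) < i + 1) =
      insert ⟨i, h⟩ (Finset.univ.filter (fun j : Fin n => (j : ℕ) < i)) := by
    ext x
    simp only [Finset.mem_filter, Finset.mem_univ, true_and, Finset.mem_insert]
    constructor
    · intro hx
      rcases Nat.lt_or_ge (x : ℕ) i with h' | h'
      · exact Or.inr h'
      · left; apply Fin.ext; simp; omega
    · rintro (rfl | hx)
      · simp
      · omega
  rw [hset, Finset.sum_insert (by simp), add_comm]

lemma degE_eq_sum (a : Fin n →₀ ℕ) : degE a = ∑ j, a j := by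
  rw [degE, Finsupp.sum_fintype]
  intro; rfl

lemma psum_n (a : Fin n →₀ ℕ) {i : ℕ} (h : n ≤ i) : psum a i = degE a := by
  rw [degE_eq_sum, psum]
  apply Finset.sum_congr _ (fun _ _ => rfl)
  ext x
  simp only [Finset.mem_filter, Finset.mem_univ, true_and, iff_true]
  exact lt_of_lt_of_le x.isLt h

lemma psum_le_degE (a : Fin n →₀ ℕ) (i : ℕ) : psum a i ≤ degE a := by
  rcases Nat.le_total n i with h | h
  · exact le_of_eq (psum_n a h)
  · calc psum a i ≤ psum a n := psum_mono a h
      _ = degE a := psum_n a le_rfl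

lemma psum_add (a b : Fin n →₀ ℕ) (i : ℕ) : psum (a + b) i = psum a i + psum b i := by
  unfold psum
  rw [← Finset.sum_add_distrib]
  exact Finset.sum_congr rfl (fun x _ => by simp)

lemma psum_single (x : Fin n) (c : ℕ) (i : ℕ) :
    psum (Finsupp.single x c) i = if (x : ℕ) < i then c else 0 := by
  unfold psum
  by_cases hx : (x : ℕ) < i
  · rw [Finset.sum_eq_single_of_mem x (by simp [hx])]
    · simp [hx]
    · intro b _ hb
      exact Finsupp.single_eq_of_ne' (Ne.symm hb)
  · rw [if_neg hx]
    apply Finset.sum_eq_zero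
    intro b hb
    simp only [Finset.mem_filter, Finset.mem_univ, true_and] at hb
    apply Finsupp.single_eq_of_ne'
    intro hxb; rw [hxb] at hx; exact hx hb

lemma psum_sub {a s : Fin n →₀ ℕ} (h : s ≤ a) (i : ℕ) :
    psum (a - s) i = psum a i - psum s i := by
  have hpt : ∀ x : Fin n, s x ≤ a x := fun x => Finsupp.le_def.mp h x
  have h1 : psum (a - s) i + psum s i = psum a i := by
    unfold psum
    rw [← Finset.sum_add_distrib]
    apply Finset.sum_congr rfl
    intro x _
    have h1 : (a - s) x = a x - s x := Finsupp.tsub_apply a s x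
    have h2 := hpt x
    omega
  omega

lemma psum_le_psum_of_le {a b : Fin n →₀ ℕ} (h : a ≤ b) (i : ℕ) : psum a i ≤ psum b i :=
  Finset.sum_le_sum fun x _ => Finsupp.le_def.mp h x

lemma psum_ext {a b : Fin n →₀ ℕ} (h : ∀ i, i ≤ n → psum a i = psum b i) : a = b := by
  ext x
  have h1 := h x ((Nat.le_of_lt x.isLt))
  have h2 := h (x + 1) x.isLt
  have ha := psum_succ a x.isLt
  have hb := psum_succ b x.isLt
  have hx : (⟨(x : ℕ), x.isLt⟩ : Fin n) = x := Fin.ext rfl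
  rw [hx] at ha hb
  omega


variable {k : Type} [CommRing k] {I : Ideal (MvPolynomial (Fin n) k)}

lemma mem_of_add (s : Fin n →₀ ℕ) {a : Fin n →₀ ℕ} (hu : monomial a 1 ∈ I) :
    (monomial (a + s) 1 : MvPolynomial (Fin n) k) ∈ I := by
  have h : (monomial (a + s) 1 : MvPolynomial (Fin n) k) = monomial s 1 * monomial a 1 := by
    rw [monomial_mul, one_mul, add_comm]
  rw [h]
  exact Ideal.mul_mem_left I _ hu

lemma dominance_aux (hB : IsBorelFixed I) (b : Fin n →₀ ℕ) :
    ∀ N (u : Fin n →₀ ℕ), (∑ ρ ∈ Finset.range (n + 1), (psum b ρ - psum u ρ)) ≤ N →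
    (monomial u 1 : MvPolynomial (Fin n) k) ∈ I → degE b = degE u →
    (∀ ρ, ρ ≤ n → psum u ρ ≤ psum b ρ) →
    (monomial b 1 : MvPolynomial (Fin n) k) ∈ I := by
  intro N
  induction N with
  | zero =>
    intro u hm hu hdeg hdom
    have hz : ∀ ρ ∈ Finset.range (n + 1), psum b ρ - psum u ρ = 0 := by
      rw [← Finset.sum_eq_zero_iff]
      omega
    have : b = u := by
      apply psum_ext
      intro i hi
      have h1 := hz i (Finset.mem_range.mpr (by omega))
      have h2 := hdom i hi
      omega
    rw [this]; exact hu
  | succ N ih =>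
    intro u hm hu hdeg hdom
    by_cases heq : ∀ ρ, ρ ≤ n → psum u ρ = psum b ρ
    · have : b = u := psum_ext (fun i hi => (heq i hi).symm)
      rw [this]; exact hu
    · push_neg at heq
      obtain ⟨ρw, hρw, hρwne⟩ := heq
      have h1 : ∃ ρ, psum u ρ < psum b ρ := ⟨ρw, lt_of_le_of_ne (hdom ρw hρw) hρwne⟩
      classical
      set ρ0 := Nat.find h1 with hρ0def
      have hρ0 : psum u ρ0 < psum b ρ0 := Nat.find_spec h1
      have hρ0le : ρ0 ≤ n := le_trans (Nat.find_min' h1 (lt_of_le_of_ne (hdom ρw hρw) hρwne)) hρw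
      have hρ0n : ρ0 ≠ n := by
        intro h
        rw [h, psum_n u le_rfl, psum_n b le_rfl, hdeg] at hρ0
        omega
      have hρ0pos : 1 ≤ ρ0 := by
        rcases Nat.eq_zero_or_pos ρ0 with h | h
        · rw [h, psum_zero, psum_zero] at hρ0; omega
        · exact h
      have h2 : ∃ ρ, ρ0 ≤ ρ ∧ psum b ρ ≤ psum u ρ := by
        refine ⟨n, by omega, ?_⟩
        rw [psum_n u le_rfl, psum_n b le_rfl, hdeg]
      set j0 := Nat.find h2 with hj0def
      have hj0 : ρ0 ≤ j0 ∧ psum b j0 ≤ psum u j0 := Nat.find_spec h2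
      have hj0le : j0 ≤ n := Nat.find_min' h2 ⟨by omega, by rw [psum_n u le_rfl, psum_n b le_rfl, hdeg]⟩
      have hj0ne : ρ0 ≠ j0 := by
        intro h; rw [← h] at hj0; omega
      have hmid : ∀ r, ρ0 ≤ r → r < j0 → psum u r < psum b r := by
        intro r h h'
        have := Nat.find_min h2 h'
        push_neg at this
        have hr : r ≤ n := by omega
        have := hdom r hr
        rcases Nat.lt_or_ge (psum u r) (psum b r) with hc | hc
        · exact hc
        · exfalso
          have := Nat.find_min h2 h'
          push_neg at this
          have h3 := this h
          omega
      set j := j0 - 1 with hjdef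
      have hρ0j : ρ0 ≤ j := by omega
      have hjn : j < n := by omega
      set l := ρ0 - 1 with hldef
      have hlj : l < j := by omega
      have hln : l < n := by omega
      have hpsj : psum u (j + 1) = psum u j + u ⟨j, hjn⟩ := psum_succ u hjn
      have hj1 : j + 1 = j0 := by omega
      have huj : 1 ≤ u ⟨j, hjn⟩ := by
        have hb1 : psum b j ≤ psum b j0 := psum_mono b (by omega)
        have hmidj := hmid j hρ0j (by omega)
        rw [hj1] at hpsj
        omega
      set u' := u + Finsupp.single (⟨l, hln⟩ : Fin n) 1 - Finsupp.single (⟨j, hjn⟩ : Fin n) 1 with hu'def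
      have hu' : (monomial u' 1 : MvPolynomial (Fin n) k) ∈ I := by
        apply hB u hu ⟨j, hjn⟩ ⟨l, hln⟩ (Fin.mk_lt_mk.mpr hlj)
        omega
      have hle : Finsupp.single (⟨j, hjn⟩ : Fin n) 1 ≤ u + Finsupp.single (⟨l, hln⟩ : Fin n) 1 := by
        rw [Finsupp.single_le_iff]
        have hlj' : (⟨l, hln⟩ : Fin n) ≠ ⟨j, hjn⟩ := by
          intro h
          have := Fin.mk.inj_iff.mp h
          omega
        rw [Finsupp.add_apply, Finsupp.single_apply, if_neg (by exact fun h => hlj' (by exact h ▸ rfl))]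
        omega
      have psu' : ∀ ρ, psum u' ρ = psum u ρ + (if l < ρ then 1 else 0) - (if j < ρ then 1 else 0) := by
        intro ρ
        rw [hu'def, psum_sub hle ρ, psum_add, psum_single, psum_single]
      have hterm : ∀ ρ, psum u ρ ≤ psum u' ρ := by
        intro ρ
        rw [psu' ρ]
        split <;> split <;> omega
      have hstrict : psum u' ρ0 = psum u ρ0 + 1 := by
        rw [psu' ρ0, if_pos (by omega), if_neg (by omega)]
        omega
      have hm' : (∑ ρ ∈ Finset.range (n + 1), (psum b ρ - psum u' ρ)) ≤ N := by
        have hlt : (∑ ρ ∈ Finset.range (n + 1), (psum b ρ - psum u' ρ)) <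
            (∑ ρ ∈ Finset.range (n + 1), (psum b ρ - psum u ρ)) := by
          apply Finset.sum_lt_sum
          · intro i _
            have := hterm i
            omega
          · refine ⟨ρ0, Finset.mem_range.mpr (by omega), ?_⟩
            rw [hstrict]
            omega
        omega
      have hdeg' : degE b = degE u' := by
        rw [hdeg]
        have h3 := psu' n
        rw [if_pos hln, if_pos hjn] at h3
        have h4 : psum u n = degE u := psum_n u le_rfl
        have h5 : psum u' n = degE u' := psum_n u' le_rfl
        omega
      apply ih u' hm' hu' hdeg'
      intro ρ hρ
      rw [psu' ρ]
      by_cases hc1 : ρ ≤ l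
      · rw [if_neg (by omega), if_neg (by omega)]
        have := hdom ρ hρ
        omega
      · by_cases hc2 : ρ ≤ j
        · rw [if_pos (by omega), if_neg (by omega)]
          have := hmid ρ (by omega) (by omega)
          omega
        · rw [if_pos (by omega), if_pos (by omega)]
          have := hdom ρ hρ
          omega

lemma dominance_mem (hB : IsBorelFixed I) {u b : Fin n →₀ ℕ}
    (hu : (monomial u 1 : MvPolynomial (Fin n) k) ∈ I) (hdeg : degE b = degE u)
    (hdom : ∀ ρ, ρ ≤ n → psum u ρ ≤ psum b ρ) :
    (monomial b 1 : MvPolynomial (Fin n) k) ∈ I :=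
  dominance_aux hB b _ u le_rfl hu hdeg hdom


noncomputable def trunc (e : ℕ) (b : Fin n →₀ ℕ) : Fin n →₀ ℕ :=
  Finsupp.equivFunOnFinite.symm (fun x => min (psum b ((x : ℕ) + 1)) e - min (psum b (x : ℕ)) e)

lemma trunc_apply (e : ℕ) (b : Fin n →₀ ℕ) (x : Fin n) :
    trunc e b x = min (psum b ((x : ℕ) + 1)) e - min (psum b (x : ℕ)) e := rfl

lemma psum_trunc (e : ℕ) (b : Fin n →₀ ℕ) : ∀ ρ, ρ ≤ n → psum (trunc e b) ρ = min (psum b ρ) e := by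
  intro ρ
  induction ρ with
  | zero => intro _; simp [psum_zero]
  | succ ρ ih =>
    intro h
    have hρn : ρ < n := by omega
    rw [psum_succ _ hρn, ih (by omega)]
    have happ : trunc e b ⟨ρ, hρn⟩ = min (psum b (ρ + 1)) e - min (psum b ρ) e := trunc_apply e b _
    have hmono : psum b ρ ≤ psum b (ρ + 1) := psum_mono b (by omega)
    rw [happ]
    omega

lemma trunc_self (b : Fin n →₀ ℕ) : trunc (degE b) b = b := by
  apply psum_ext
  intro i hi
  rw [psum_trunc _ _ i hi]
  exact min_eq_left (psum_le_degE b i)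

lemma boxExp_apply (d : ℕ) (a : Fin n →₀ ℕ) (p : Fin n × Fin d) :
    boxExp d a p =
      if psum a (p.1 : ℕ) ≤ (p.2 : ℕ) ∧ (p.2 : ℕ) < psum a ((p.1 : ℕ) + 1) then 1 else 0 := by
  unfold boxExp
  rw [Finsupp.finset_sum_apply]
  by_cases h : psum a (p.1 : ℕ) ≤ (p.2 : ℕ) ∧ (p.2 : ℕ) < psum a ((p.1 : ℕ) + 1)
  · rw [if_pos h, Finset.sum_eq_single_of_mem p (by simp [h])]
    · simp
    · intro q _ hq
      exact Finsupp.single_eq_of_ne' hq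
  · rw [if_neg h]
    apply Finset.sum_eq_zero
    intro q hq
    simp only [Finset.mem_filter, Finset.mem_univ, true_and] at hq
    apply Finsupp.single_eq_of_ne'
    intro hqp
    rw [hqp] at hq
    exact h hq

lemma exists_minGen_boxExp_le (hB : IsBorelFixed I) {b : Fin n →₀ ℕ}
    (hb : (monomial b 1 : MvPolynomial (Fin n) k) ∈ I) (d : ℕ) :
    ∃ a, IsMinGen I a ∧ boxExp d a ≤ boxExp d b := by
  classical
  have hP : ∃ e, (monomial (trunc e b) 1 : MvPolynomial (Fin n) k) ∈ I :=
    ⟨degE b, by rw [trunc_self]; exact hb⟩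
  set es := Nat.find hP with hesdef
  have he : (monomial (trunc es b) 1 : MvPolynomial (Fin n) k) ∈ I := Nat.find_spec hP
  have hesle : es ≤ degE b := Nat.find_min' hP (by rw [trunc_self]; exact hb)
  refine ⟨trunc es b, ⟨he, ?_⟩, ?_⟩
  · intro v hv hcon
    have happ : trunc es b v = min (psum b ((v : ℕ) + 1)) es - min (psum b (v : ℕ)) es :=
      trunc_apply es b v
    have hvlt : psum b (v : ℕ) < es := by
      by_contra h
      push_neg at h
      have h1 : psum b (v : ℕ) ≤ psum b ((v : ℕ) + 1) := psum_mono b (by omega)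
      apply hv
      rw [happ]
      omega
    have hec : 1 ≤ es := by omega
    have hsle : Finsupp.single v 1 ≤ trunc es b := by
      rw [Finsupp.single_le_iff]
      omega
    have hvn : (v : ℕ) < n := v.isLt
    have hIdom : (monomial (trunc (es - 1) b) 1 : MvPolynomial (Fin n) k) ∈ I := by
      apply dominance_mem hB hcon
      · have h1 : psum (trunc es b - Finsupp.single v 1) n =
            psum (trunc es b) n - psum (Finsupp.single v 1) n := psum_sub hsle n
        have h2 := psum_trunc es b n le_rfl
        have h3 := psum_trunc (es - 1) b n le_rfl
        have h4 := psum_single v 1 n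
        have h5 : psum b n = degE b := psum_n b le_rfl
        have h6 : psum (trunc (es - 1) b) n = degE (trunc (es - 1) b) := psum_n _ le_rfl
        have h7 : psum (trunc es b - Finsupp.single v 1) n
            = degE (trunc es b - Finsupp.single v 1) := psum_n _ le_rfl
        rw [if_pos hvn] at h4
        omega
      · intro ρ hρ
        rw [psum_sub hsle ρ, psum_trunc es b ρ hρ, psum_trunc (es - 1) b ρ hρ, psum_single]
        by_cases hvρ : (v : ℕ) < ρ
        · rw [if_pos hvρ]
          omega
        · rw [if_neg hvρ]
          have : psum b ρ ≤ psum b (v : ℕ) := psum_mono b (by omega)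
          omega
    exact absurd hIdom (Nat.find_min hP (by omega))
  · rw [Finsupp.le_def]
    intro p
    rw [boxExp_apply, boxExp_apply]
    have h1 := psum_trunc es b (p.1 : ℕ) (le_of_lt p.1.isLt)
    have h2 := psum_trunc es b ((p.1 : ℕ) + 1) p.1.isLt
    split_ifs with hA hB2
    · exact le_refl 1
    · exfalso
      apply hB2
      rw [h1, h2] at hA
      constructor <;> omega
    · exact Nat.zero_le _
    · exact Nat.zero_le _


lemma degE_eq (a : Fin n →₀ ℕ) : degE a = psum a n := (psum_n a le_rfl).symm

def SinW (d : ℕ) (W : Set (ℕ × ℕ)) (b : Fin n →₀ ℕ) : Prop :=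
  ∀ r t : ℕ, r < n → t < d → psum b r ≤ t → t < psum b (r + 1) → (r, t) ∈ W

def chainCovers (mm : ℕ) (c : ℕ → ℕ) (b : Fin n →₀ ℕ) : Prop :=
  ∃ ρ, ρ < mm ∧ psum b ρ ≤ c ρ ∧ c ρ < psum b (ρ + 1)

def base (c : ℕ → ℕ) (ρ : ℕ) : ℕ := if ρ = 0 then 0 else c (ρ - 1)

noncomputable def mkB (g : ℕ → ℕ) : Fin n →₀ ℕ :=
  Finsupp.equivFunOnFinite.symm (fun x => g ((x : ℕ) + 1) - g (x : ℕ))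

lemma psum_mkB (g : ℕ → ℕ) (hg0 : g 0 = 0) (hg : ∀ ρ, ρ < n → g ρ ≤ g (ρ + 1)) :
    ∀ ρ, ρ ≤ n → psum (mkB (n := n) g) ρ = g ρ := by
  intro ρ
  induction ρ with
  | zero => intro _; rw [psum_zero, hg0]
  | succ ρ ih =>
    intro h
    have hρn : ρ < n := by omega
    rw [psum_succ _ hρn, ih (by omega)]
    have happ : mkB (n := n) g ⟨ρ, hρn⟩ = g (ρ + 1) - g ρ := rfl
    have := hg ρ hρn
    rw [happ]
    omega

lemma cascade (c : ℕ → ℕ) (i : ℕ) (hmono : ∀ ρ, ρ + 1 < i → c ρ ≤ c (ρ + 1))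
    (b : Fin n →₀ ℕ)
    (hunc : ∀ ρ, ρ < i → ¬(psum b ρ ≤ c ρ ∧ c ρ < psum b (ρ + 1))) :
    ∀ ρ, ρ ≤ i → psum b ρ ≤ base c ρ := by
  intro ρ
  induction ρ with
  | zero => intro _; rw [psum_zero]; exact Nat.zero_le _
  | succ ρ ih =>
    intro h
    have hρi : ρ < i := by omega
    have hbase : base c ρ ≤ c ρ := by
      unfold base
      split
      · exact Nat.zero_le _
      · next hρ0 =>
        have := hmono (ρ - 1) (by omega)
        have hρeq : ρ - 1 + 1 = ρ := by omega
        rw [hρeq] at this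
        exact this
    have h1 : psum b ρ ≤ c ρ := le_trans (ih (by omega)) hbase
    have h2 := hunc ρ hρi
    have h3 : ¬ (c ρ < psum b (ρ + 1)) := fun hc => h2 ⟨h1, hc⟩
    unfold base
    rw [if_neg (by omega)]
    simpa using h3

lemma sep_rec (hB : IsBorelFixed I) (d : ℕ) (W : Set (ℕ × ℕ))
    (H : ∀ b : Fin n →₀ ℕ, (monomial b 1 : MvPolynomial (Fin n) k) ∈ I → 1 ≤ degE b →
      degE b ≤ d → ¬ SinW (n := n) d W b) :
    ∀ fuel i (c : ℕ → ℕ), n + 1 - i ≤ fuel → i ≤ n →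
    (∀ ρ, ρ + 1 < i → c ρ ≤ c (ρ + 1)) →
    (∀ ρ, ρ < i → c ρ < d ∧ (ρ, c ρ) ∉ W) →
    (∀ ρ, ρ < i → ∀ t, base c ρ ≤ t → t < c ρ → (ρ, t) ∈ W) →
    ∃ (m : ℕ) (c' : ℕ → ℕ), m ≤ n ∧ (∀ ρ, ρ + 1 < m → c' ρ ≤ c' (ρ + 1)) ∧
      (∀ ρ, ρ < m → c' ρ < d ∧ (ρ, c' ρ) ∉ W) ∧
      (∀ b : Fin n →₀ ℕ, (monomial b 1 : MvPolynomial (Fin n) k) ∈ I → 1 ≤ degE b →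
        degE b ≤ d → chainCovers m c' b) := by
  intro fuel
  induction fuel with
  | zero => intro i c hfuel hin _ _ _; omega
  | succ fuel ih =>
    intro i c hfuel hin hmono hcell hWseg
    by_cases hcov : ∀ b : Fin n →₀ ℕ, (monomial b 1 : MvPolynomial (Fin n) k) ∈ I →
        1 ≤ degE b → degE b ≤ d → chainCovers i c b
    · exact ⟨i, c, hin, hmono, hcell, hcov⟩
    · push_neg at hcov
      obtain ⟨u, huI, hud1, hudd, hunc⟩ := hcov
      have hunc' : ∀ ρ, ρ < i → ¬(psum u ρ ≤ c ρ ∧ c ρ < psum u (ρ + 1)) := by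
        intro ρ hρ hand
        exact hunc ⟨ρ, hρ, hand⟩
      have hcas := cascade c i hmono u hunc'
      have hn1 : 1 ≤ n := by
        by_contra hn
        rw [degE_eq] at hud1
        have hz : psum u n = 0 := by
          unfold psum
          apply Finset.sum_eq_zero
          intro x _
          exact absurd x.isLt (by omega)
        omega
      have hd1 : 1 ≤ d := le_trans hud1 hudd
      rcases Nat.lt_or_ge i n with hiln | hige
      · -- i < n
        by_cases hex : ∃ t, base c i ≤ t ∧ t < d ∧ (i, t) ∉ W
        · classical
          set ci := Nat.find hex with hcidef
          obtain ⟨hci1, hci2, hci3⟩ := Nat.find_spec hex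
          set c' := Function.update c i ci with hc'def
          have hc'eq : ∀ ρ, ρ ≠ i → c' ρ = c ρ := by
            intro ρ hρ
            rw [hc'def]
            exact Function.update_of_ne hρ _ _
          have hc'i : c' i = ci := by rw [hc'def]; exact Function.update_self _ _ _
          have hbase' : ∀ ρ, ρ ≤ i → base c' ρ = base c ρ := by
            intro ρ hρ
            unfold base
            split
            · rfl
            · next h0 => exact hc'eq (ρ - 1) (by omega)
          apply ih (i + 1) c' (by omega) (by omega)
          · intro ρ hρ
            rcases Nat.lt_or_ge (ρ + 1) i with h | h
            · rw [hc'eq ρ (by omega), hc'eq (ρ + 1) (by omega)]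
              exact hmono ρ h
            · have hρ1 : ρ + 1 = i := by omega
              rw [hc'eq ρ (by omega), hρ1, hc'i]
              have hbi : base c i = c ρ := by
                unfold base
                rw [if_neg (by omega)]
                congr 1
                omega
              rw [← hbi]
              exact hci1
          · intro ρ hρ
            rcases Nat.lt_or_ge ρ i with h | h
            · rw [hc'eq ρ (by omega)]
              exact hcell ρ h
            · have hρi : ρ = i := by omega
              rw [hρi, hc'i]
              exact ⟨hci2, hci3⟩
          · intro ρ hρ t ht1 ht2
            rcases Nat.lt_or_ge ρ i with h | h
            · rw [hbase' ρ (by omega)] at ht1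
              rw [hc'eq ρ (by omega)] at ht2
              exact hWseg ρ h t ht1 ht2
            · have hρi : ρ = i := by omega
              subst hρi
              rw [hbase' ρ le_rfl] at ht1
              rw [hc'i] at ht2
              by_contra hW
              have := Nat.find_min hex ht2
              push_neg at this
              have := this ht1 (by omega)
              exact hW this
        · -- F1 contradiction
          push_neg at hex
          exfalso
          set g : ℕ → ℕ := fun ρ => if ρ = 0 then 0 else if ρ ≤ i then c (ρ - 1) else d
            with hgdef
          have hgv0 : g 0 = 0 := by simp [hgdef]
          have hgvle : ∀ ρ, 1 ≤ ρ → ρ ≤ i → g ρ = c (ρ - 1) := by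
            intro ρ h1 h2
            simp only [hgdef]
            rw [if_neg (by omega), if_pos h2]
          have hgvgt : ∀ ρ, i < ρ → g ρ = d := by
            intro ρ h1
            simp only [hgdef]
            rw [if_neg (by omega), if_neg (by omega)]
          have hgb : ∀ ρ, 1 ≤ ρ → ρ ≤ i → g ρ = base c ρ := by
            intro ρ h1 h2
            rw [hgvle ρ h1 h2]
            unfold base
            rw [if_neg (by omega)]
          have hg0 : g 0 = 0 := hgv0
          have hgmono : ∀ ρ, ρ < n → g ρ ≤ g (ρ + 1) := by
            intro ρ hρ
            by_cases h0 : ρ = 0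
            · subst h0
              rw [hgv0]
              exact Nat.zero_le _
            · by_cases h2 : ρ + 1 ≤ i
              · rw [hgvle ρ (by omega) (by omega), hgvle (ρ + 1) (by omega) h2]
                have := hmono (ρ - 1) (by omega)
                have heq : ρ - 1 + 1 = ρ := by omega
                rw [heq] at this
                have heq2 : ρ + 1 - 1 = ρ := by omega
                rw [heq2]
                exact this
              · by_cases h1 : ρ ≤ i
                · rw [hgvle ρ (by omega) h1, hgvgt (ρ + 1) (by omega)]
                  have := (hcell (ρ - 1) (by omega)).1
                  omega
                · rw [hgvgt ρ (by omega), hgvgt (ρ + 1) (by omega)]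
          set B := mkB (n := n) g with hBdef
          have hpB : ∀ ρ, ρ ≤ n → psum B ρ = g ρ := psum_mkB g hg0 hgmono
          set v : Fin n := ⟨n - 1, by omega⟩ with hvdef
          set up := u + Finsupp.single v (d - degE u) with hupdef
          have hupI : (monomial up 1 : MvPolynomial (Fin n) k) ∈ I := mem_of_add _ huI
          have hpup : ∀ ρ, psum up ρ = psum u ρ + (if n - 1 < ρ then d - degE u else 0) := by
            intro ρ
            rw [hupdef, psum_add, psum_single]
          have hdegup : degE up = d := by
            rw [degE_eq, hpup n, if_pos (by omega), ← degE_eq]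
            omega
          have hdegB : degE B = d := by
            rw [degE_eq, hpB n le_rfl, hgvgt n (by omega)]
          have hBI : (monomial B 1 : MvPolynomial (Fin n) k) ∈ I := by
            apply dominance_mem hB hupI
            · rw [hdegB, hdegup]
            · intro ρ hρ
              rw [hpup ρ, hpB ρ hρ]
              by_cases h0 : ρ = 0
              · subst h0
                rw [hgv0, if_neg (by omega), psum_zero]
              · by_cases h1 : ρ ≤ i
                · rw [hgvle ρ (by omega) h1, if_neg (by omega)]
                  have h3 := hcas ρ (by omega)
                  unfold base at h3
                  rw [if_neg h0] at h3
                  omega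
                · rw [hgvgt ρ (by omega)]
                  have h2 : psum u ρ ≤ degE u := psum_le_degE u ρ
                  split <;> omega
          apply H B hBI
          · rw [hdegB]; omega
          · rw [hdegB]
          · intro r t hr ht hp1 hp2
            rw [hpB r (by omega)] at hp1
            rw [hpB (r + 1) (by omega)] at hp2
            rcases Nat.lt_or_ge r i with hri | hri
            · rw [hgvle (r + 1) (by omega) (by omega)] at hp2
              have heq2 : r + 1 - 1 = r := by omega
              rw [heq2] at hp2
              apply hWseg r hri t _ hp2
              by_cases h0 : r = 0
              · subst h0
                rw [hgv0] at hp1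
                unfold base
                rw [if_pos rfl]
                exact hp1
              · rw [hgb r (by omega) (by omega)] at hp1
                exact hp1
            · rcases Nat.lt_or_ge r (i + 1) with hri2 | hri2
              · have hreq : r = i := by omega
                subst hreq
                apply hex t _ ht
                by_cases h0 : r = 0
                · subst h0
                  rw [hgv0] at hp1
                  unfold base
                  rw [if_pos rfl]
                  exact hp1
                · rw [hgb r (by omega) (by omega)] at hp1
                  exact hp1
              · rw [hgvgt r (by omega)] at hp1
                omega
      · -- i = n : F2 contradiction
        exfalso
        have hieq : i = n := by omega
        set g : ℕ → ℕ := fun ρ => if ρ = 0 then 0 else c (ρ - 1) with hgdef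
        have hg0 : g 0 = 0 := by simp [hgdef]
        have hgvpos : ∀ ρ, 1 ≤ ρ → g ρ = c (ρ - 1) := by
          intro ρ h1
          simp only [hgdef]
          rw [if_neg (by omega)]
        have hgb : ∀ ρ, 1 ≤ ρ → g ρ = base c ρ := by
          intro ρ h1
          rw [hgvpos ρ h1]
          unfold base
          rw [if_neg (by omega)]
        have hgmono : ∀ ρ, ρ < n → g ρ ≤ g (ρ + 1) := by
          intro ρ hρ
          by_cases h0 : ρ = 0
          · subst h0
            rw [hg0]
            exact Nat.zero_le _
          · rw [hgvpos ρ (by omega), hgvpos (ρ + 1) (by omega)]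
            have := hmono (ρ - 1) (by omega)
            have heq : ρ - 1 + 1 = ρ := by omega
            rw [heq] at this
            have heq2 : ρ + 1 - 1 = ρ := by omega
            rw [heq2]
            exact this
        set B := mkB (n := n) g with hBdef
        have hpB : ∀ ρ, ρ ≤ n → psum B ρ = g ρ := psum_mkB g hg0 hgmono
        have hdegu : degE u ≤ c (n - 1) := by
          have := hcas n (by omega)
          unfold base at this
          rw [if_neg (by omega)] at this
          rw [degE_eq]
          exact this
        have hcd : c (n - 1) < d := (hcell (n - 1) (by omega)).1
        set v : Fin n := ⟨n - 1, by omega⟩ with hvdef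
        set up := u + Finsupp.single v (c (n - 1) - degE u) with hupdef
        have hupI : (monomial up 1 : MvPolynomial (Fin n) k) ∈ I := mem_of_add _ huI
        have hpup : ∀ ρ, psum up ρ = psum u ρ + (if n - 1 < ρ then c (n - 1) - degE u else 0) := by
          intro ρ
          rw [hupdef, psum_add, psum_single]
        have hdegup : degE up = c (n - 1) := by
          rw [degE_eq, hpup n, if_pos (by omega), ← degE_eq]
          omega
        have hgn : g n = c (n - 1) := hgvpos n (by omega)
        have hBI : (monomial B 1 : MvPolynomial (Fin n) k) ∈ I := by
          apply dominance_mem hB hupI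
          · rw [degE_eq, hpB n le_rfl, hgn, hdegup]
          · intro ρ hρ
            rw [hpup ρ, hpB ρ hρ]
            by_cases h0 : ρ = 0
            · subst h0
              rw [hg0, if_neg (by omega), psum_zero]
            · rw [hgvpos ρ (by omega)]
              by_cases h1 : ρ = n
              · subst h1
                rw [if_pos (by omega), ← degE_eq]
                omega
              · rw [if_neg (by omega)]
                have := hcas ρ (by omega)
                unfold base at this
                rw [if_neg h0] at this
                omega
        apply H B hBI
        · rw [degE_eq, hpB n le_rfl, hgn]
          omega
        · rw [degE_eq, hpB n le_rfl, hgn]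
          omega
        · intro r t hr ht hp1 hp2
          rw [hpB r (by omega)] at hp1
          rw [hpB (r + 1) (by omega), hgvpos (r + 1) (by omega)] at hp2
          have hp2' : t < c r := by
            have heq : r + 1 - 1 = r := by omega
            rwa [heq] at hp2
          apply hWseg r (by omega) t _ hp2'
          by_cases h0 : r = 0
          · subst h0
            rw [hg0] at hp1
            unfold base
            rw [if_pos rfl]
            exact hp1
          · rw [hgb r (by omega)] at hp1
            exact hp1

lemma separation (hB : IsBorelFixed I) (d : ℕ) (W : Set (ℕ × ℕ))
    (H : ∀ b : Fin n →₀ ℕ, (monomial b 1 : MvPolynomial (Fin n) k) ∈ I → 1 ≤ degE b →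
      degE b ≤ d → ¬ SinW (n := n) d W b) :
    ∃ (m : ℕ) (c' : ℕ → ℕ), m ≤ n ∧ (∀ ρ, ρ + 1 < m → c' ρ ≤ c' (ρ + 1)) ∧
      (∀ ρ, ρ < m → c' ρ < d ∧ (ρ, c' ρ) ∉ W) ∧
      (∀ b : Fin n →₀ ℕ, (monomial b 1 : MvPolynomial (Fin n) k) ∈ I → 1 ≤ degE b →
        degE b ≤ d → chainCovers m c' b) := by
  apply sep_rec hB d W H (n + 1) 0 (fun _ => 0) (by omega) (by omega)
  · intro ρ hρ; omega
  · intro ρ hρ; omega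
  · intro ρ hρ; omega


section Alg

open scoped Classical

variable {K : Type} [Field K] {σ : Type}

noncomputable def piK (s : Set σ) : MvPolynomial σ K →ₐ[K] MvPolynomial σ K :=
  aeval (fun x => if x ∈ s then (0 : MvPolynomial σ K) else X x)

lemma piK_monomial_free (s : Set σ) (ν : σ →₀ ℕ) (cc : K) (hfree : ∀ x ∈ s, ν x = 0) :
    piK s (monomial ν cc) = monomial ν cc := by
  rw [piK, aeval_monomial, monomial_eq]
  congr 1
  apply Finsupp.prod_congr
  intro x hx
  rw [if_neg]
  intro hxs
  rw [Finsupp.mem_support_iff] at hx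
  exact hx (hfree x hxs)

lemma piK_monomial_nonfree (s : Set σ) (ν : σ →₀ ℕ) (cc : K) (x0 : σ) (hx0 : x0 ∈ s)
    (hν : ν x0 ≠ 0) : piK s (monomial ν cc) = 0 := by
  rw [piK, aeval_monomial]
  have hz : (ν.prod fun x e => (if x ∈ s then (0 : MvPolynomial σ K) else X x) ^ e) = 0 := by
    apply Finset.prod_eq_zero (Finsupp.mem_support_iff.mpr hν)
    dsimp only
    rw [if_pos hx0, zero_pow hν]
  rw [hz, mul_zero]

lemma mem_span_X_iff_piK (s : Set σ) (f : MvPolynomial σ K) :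
    f ∈ Ideal.span (X '' s : Set (MvPolynomial σ K)) ↔ piK s f = 0 := by
  constructor
  · intro hf
    have hle : Ideal.span (X '' s : Set (MvPolynomial σ K)) ≤
        RingHom.ker (piK (K := K) s).toRingHom := by
      rw [Ideal.span_le]
      rintro q ⟨x, hxs, rfl⟩
      simp only [SetLike.mem_coe, RingHom.mem_ker, AlgHom.toRingHom_eq_coe, RingHom.coe_coe]
      rw [piK, aeval_X, if_pos hxs]
    exact hle hf
  · intro hf
    rw [mem_ideal_span_X_image]
    intro μ hμ
    by_contra hno
    push_neg at hno
    have hfree : ∀ x ∈ s, μ x = 0 := hno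
    have hcoeff : coeff μ (piK s f) = coeff μ f := by
      conv_lhs => rw [f.as_sum]
      rw [map_sum, coeff_sum]
      rw [Finset.sum_eq_single μ]
      · rw [piK_monomial_free s μ _ hfree, coeff_monomial, if_pos rfl]
      · intro ν hν hνμ
        by_cases hfree2 : ∀ x ∈ s, ν x = 0
        · rw [piK_monomial_free s ν _ hfree2, coeff_monomial, if_neg hνμ]
        · push_neg at hfree2
          obtain ⟨x0, hx0s, hx0⟩ := hfree2
          rw [piK_monomial_nonfree s ν _ x0 hx0s hx0, coeff_zero]
      · intro hμ'
        exact absurd hμ hμ'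
    rw [hf] at hcoeff
    simp only [coeff_zero] at hcoeff
    rw [MvPolynomial.mem_support_iff] at hμ
    exact hμ hcoeff.symm

lemma isPrime_span_X (s : Set σ) :
    (Ideal.span (X '' s : Set (MvPolynomial σ K))).IsPrime := by
  constructor
  · intro htop
    have h1 : (1 : MvPolynomial σ K) ∈ Ideal.span (X '' s : Set (MvPolynomial σ K)) := by
      rw [htop]; trivial
    rw [mem_span_X_iff_piK, map_one] at h1
    exact one_ne_zero h1
  · intro f g hfg
    rw [mem_span_X_iff_piK, map_mul] at hfg
    rcases mul_eq_zero.mp hfg with h | h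
    · exact Or.inl ((mem_span_X_iff_piK s f).mpr h)
    · exact Or.inr ((mem_span_X_iff_piK s g).mpr h)

variable {R : Type} [CommRing R]

lemma mem_foldr (L : List (Ideal R)) (r : R) :
    r ∈ L.foldr (· ⊓ ·) ⊤ ↔ ∀ Q ∈ L, r ∈ Q := by
  induction L with
  | nil => simp
  | cons Q L ih =>
    simp only [List.foldr_cons, Submodule.mem_inf, ih, List.mem_cons]
    constructor
    · rintro ⟨h1, h2⟩ Q' (rfl | hQ')
      · exact h1
      · exact h2 Q' hQ'
    · intro h
      exact ⟨h Q (Or.inl rfl), fun Q' hQ' => h Q' (Or.inr hQ')⟩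

lemma colon_chain : ∀ (L : List (Ideal R)) (p : Ideal R), p.IsPrime → ∀ f : R,
    (∀ r, r ∈ p ↔ r * f ∈ L.foldr (· ⊓ ·) ⊤) → f ∉ L.foldr (· ⊓ ·) ⊤ →
    ∃ Q ∈ L, ∃ g, g ∉ Q ∧ ∀ r, r ∈ p ↔ r * g ∈ Q := by
  intro L
  induction L with
  | nil =>
    intro p hp f hiff hf
    exact absurd Submodule.mem_top hf
  | cons Q L ih =>
    intro p hp f hiff hf
    by_cases hex : ∃ g, g * f ∈ Q ∧ g * f ∉ L.foldr (· ⊓ ·) ⊤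
    · obtain ⟨g0, hg1, hg2⟩ := hex
      have hg0p : g0 ∉ p := by
        intro hg0
        have := (hiff g0).mp hg0
        rw [List.foldr_cons, Submodule.mem_inf] at this
        exact hg2 this.2
      have hiff' : ∀ r, r ∈ p ↔ r * (g0 * f) ∈ L.foldr (· ⊓ ·) ⊤ := by
        intro r
        constructor
        · intro hr
          have := (hiff r).mp hr
          rw [List.foldr_cons, Submodule.mem_inf] at this
          have h2 := this.2
          have : r * (g0 * f) = g0 * (r * f) := by ring
          rw [this]
          exact Ideal.mul_mem_left _ _ h2
        · intro hr
          have hrQ : r * (g0 * f) ∈ Q := Ideal.mul_mem_left _ _ hg1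
          have hrfold : (r * g0) * f ∈ (Q :: L).foldr (· ⊓ ·) ⊤ := by
            rw [List.foldr_cons, Submodule.mem_inf]
            constructor
            · rw [mul_assoc]; exact hrQ
            · rw [mul_assoc]; exact hr
          have hrg0 : r * g0 ∈ p := (hiff (r * g0)).mpr hrfold
          rcases hp.mem_or_mem hrg0 with h | h
          · exact h
          · exact absurd h hg0p
      have hf' : g0 * f ∉ L.foldr (· ⊓ ·) ⊤ := hg2
      obtain ⟨Q', hQ', g, hg, hgiff⟩ := ih p hp (g0 * f) hiff' hf'
      exact ⟨Q', List.mem_cons_of_mem _ hQ', g, hg, hgiff⟩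
    · push_neg at hex
      refine ⟨Q, List.mem_cons_self, f, ?_, ?_⟩
      · intro hfQ
        apply hf
        rw [List.foldr_cons, Submodule.mem_inf]
        refine ⟨hfQ, ?_⟩
        have := hex 1 (by rwa [one_mul])
        rwa [one_mul] at this
      · intro r
        constructor
        · intro hr
          have := (hiff r).mp hr
          rw [List.foldr_cons, Submodule.mem_inf] at this
          exact this.1
        · intro hr
          apply (hiff r).mpr
          rw [List.foldr_cons, Submodule.mem_inf]
          exact ⟨hr, hex r hr⟩

end Alg


section Assemble

open scoped Classical

variable {d : ℕ}

lemma psum_zero_fun (i : ℕ) : psum (0 : Fin n →₀ ℕ) i = 0 :=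
  Finset.sum_eq_zero (by simp)

lemma degE_one (a : Fin n →₀ ℕ) (h : degE a = 0) : a = 0 := by
  rw [degE_eq_sum] at h
  ext x
  have := Finset.sum_eq_zero_iff.mp h x (Finset.mem_univ x)
  simpa using this

lemma boxExp_zero_le (μ : (Fin n × Fin d) →₀ ℕ) : boxExp d (0 : Fin n →₀ ℕ) ≤ μ := by
  rw [Finsupp.le_def]
  intro p
  rw [boxExp_apply, psum_zero_fun, psum_zero_fun]
  simp

lemma mono_of_adj (c : ℕ → ℕ) (m : ℕ) (h : ∀ ρ, ρ + 1 < m → c ρ ≤ c (ρ + 1)) :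
    ∀ i j, i ≤ j → j < m → c i ≤ c j := by
  intro i j hij hjm
  obtain ⟨t, rfl⟩ : ∃ t, j = i + t := ⟨j - i, by omega⟩
  clear hij
  induction t with
  | zero => exact le_rfl
  | succ t ih =>
    have h1 : i + t < m := by omega
    have h2 := h (i + t) (by omega)
    have h3 := ih h1
    calc c i ≤ c (i + t) := h3
      _ ≤ c (i + t + 1) := h2
      _ = c (i + (t + 1)) := by ring_nf

def cSet (n d : ℕ) (k : Type) [Field k] (m : ℕ) (c : ℕ → ℕ) :
    Set (MvPolynomial (Fin n × Fin d) k) :=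
  {q : MvPolynomial (Fin n × Fin d) k | ∃ (i : ℕ) (h1 : i < m) (h2 : i < n) (h3 : c i < d),
    q = X ((⟨i, h2⟩ : Fin n), (⟨c i, h3⟩ : Fin d))}

def cCells (n d m : ℕ) (c : ℕ → ℕ) : Set (Fin n × Fin d) :=
  {p | ∃ (i : ℕ) (h1 : i < m) (h2 : i < n) (h3 : c i < d),
    p = ((⟨i, h2⟩ : Fin n), (⟨c i, h3⟩ : Fin d))}

variable {k : Type} [Field k]

lemma cSet_eq_image (m : ℕ) (c : ℕ → ℕ) :
    cSet n d k m c = X '' cCells n d m c := by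
  ext q
  constructor
  · rintro ⟨i, h1, h2, h3, rfl⟩
    exact ⟨_, ⟨i, h1, h2, h3, rfl⟩, rfl⟩
  · rintro ⟨p, ⟨i, h1, h2, h3, rfl⟩, rfl⟩
    exact ⟨i, h1, h2, h3, rfl⟩

lemma isPrime_cSpan (m : ℕ) (c : ℕ → ℕ) :
    (Ideal.span (cSet n d k m c)).IsPrime := by
  rw [cSet_eq_image]
  exact isPrime_span_X _

lemma mem_cSpan_iff (m : ℕ) (c : ℕ → ℕ) (r : MvPolynomial (Fin n × Fin d) k) :
    r ∈ Ideal.span (cSet n d k m c) ↔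
      ∀ μ ∈ r.support, ∃ (i : ℕ) (h1 : i < m) (h2 : i < n) (h3 : c i < d),
        μ ((⟨i, h2⟩ : Fin n), (⟨c i, h3⟩ : Fin d)) ≠ 0 := by
  rw [cSet_eq_image, mem_ideal_span_X_image]
  constructor
  · intro h μ hμ
    obtain ⟨p, ⟨i, h1, h2, h3, rfl⟩, hne⟩ := h μ hμ
    exact ⟨i, h1, h2, h3, hne⟩
  · intro h μ hμ
    obtain ⟨i, h1, h2, h3, hne⟩ := h μ hμ
    exact ⟨_, ⟨i, h1, h2, h3, rfl⟩, hne⟩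

variable {I : Ideal (MvPolynomial (Fin n) k)}

lemma mem_boxIdeal_iff (r : MvPolynomial (Fin n × Fin d) k) :
    r ∈ boxIdeal d I ↔
      ∀ μ ∈ r.support, ∃ a : Fin n →₀ ℕ, IsMinGen I a ∧ boxExp d a ≤ μ := by
  have hset : {q : MvPolynomial (Fin n × Fin d) k |
        ∃ a : Fin n →₀ ℕ, IsMinGen I a ∧ q = monomial (boxExp d a) 1} =
      (fun e => (monomial e 1 : MvPolynomial (Fin n × Fin d) k)) ''
        {e | ∃ a : Fin n →₀ ℕ, IsMinGen I a ∧ e = boxExp d a} := by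
    ext q
    constructor
    · rintro ⟨a, ha, rfl⟩
      exact ⟨boxExp d a, ⟨a, ha, rfl⟩, rfl⟩
    · rintro ⟨e, ⟨a, ha, rfl⟩, rfl⟩
      exact ⟨a, ha, rfl⟩
  rw [boxIdeal, hset, mem_ideal_span_monomial_image]
  constructor
  · intro h μ hμ
    obtain ⟨e, ⟨a, ha, rfl⟩, hle⟩ := h μ hμ
    exact ⟨a, ha, hle⟩
  · intro h μ hμ
    obtain ⟨a, ha, hle⟩ := h μ hμ
    exact ⟨boxExp d a, ⟨a, ha, rfl⟩, hle⟩

def cOf {n d : ℕ} (f : Fin n → Fin (d + 1)) : ℕ → ℕ :=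
  fun i => if h : i < n then (f ⟨i, h⟩ : ℕ) else 0

theorem main (hB : IsBorelFixed I)
    (hd : ∀ a : Fin n →₀ ℕ, IsMinGen I a → degE a ≤ d) :
    ∀ p ∈ associatedPrimes (MvPolynomial (Fin n × Fin d) k)
      ((MvPolynomial (Fin n × Fin d) k) ⧸ boxIdeal d I),
      ∃ (m : ℕ) (c : ℕ → ℕ), m ≤ n ∧ (∀ i j : ℕ, i ≤ j → j < m → c i ≤ c j) ∧
        p = Ideal.span (cSet n d k m c) := by
  intro p hass
  obtain ⟨hp, x, hx⟩ := isAssociatedPrime_iff.mp hass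
  obtain ⟨f, rfl⟩ := Ideal.Quotient.mk_surjective x
  have hiff : ∀ r, r ∈ p ↔ r * f ∈ boxIdeal d I := by
    intro r
    rw [hx, Submodule.mem_colon_singleton,
      show r • (Ideal.Quotient.mk (boxIdeal d I) f) = Ideal.Quotient.mk _ (r * f) from
        (Submodule.Quotient.mk_smul _ r f).symm, Submodule.mem_bot,
      Ideal.Quotient.eq_zero_iff_mem]
  have hfJ : f ∉ boxIdeal d I := by
    intro hfJ
    apply hp.ne_top
    rw [Ideal.eq_top_iff_one]
    rw [hiff 1, one_mul]
    exact hfJ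
  -- the finite family of chain primes
  set F : (Fin (n + 1) × (Fin n → Fin (d + 1))) → Ideal (MvPolynomial (Fin n × Fin d) k) :=
    fun q => Ideal.span (cSet n d k q.1.val (cOf q.2)) with hFdef
  set good : (Fin (n + 1) × (Fin n → Fin (d + 1))) → Prop :=
    fun q => (∀ i j : ℕ, i ≤ j → j < q.1.val → cOf q.2 i ≤ cOf q.2 j) ∧
      boxIdeal d I ≤ F q with hgooddef
  set SP : Finset (Fin (n + 1) × (Fin n → Fin (d + 1))) := Finset.univ.filter good with hSPdef
  set L : List (Ideal (MvPolynomial (Fin n × Fin d) k)) := SP.toList.map F with hLdef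
  have hLmem : ∀ Q, Q ∈ L ↔ ∃ q ∈ SP, F q = Q := by
    intro Q
    rw [hLdef, List.mem_map]
    constructor
    · rintro ⟨q, hq, rfl⟩
      exact ⟨q, Finset.mem_toList.mp hq, rfl⟩
    · rintro ⟨q, hq, rfl⟩
      exact ⟨q, Finset.mem_toList.mpr hq, rfl⟩
  have hSPgood : ∀ q ∈ SP, good q := by
    intro q hq
    rw [hSPdef, Finset.mem_filter] at hq
    exact hq.2
  -- decomposition
  have hdecomp : boxIdeal d I = L.foldr (· ⊓ ·) ⊤ := by
    apply le_antisymm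
    · intro r hr
      rw [mem_foldr]
      intro Q hQ
      obtain ⟨q, hq, rfl⟩ := (hLmem Q).mp hQ
      exact (hSPgood q hq).2 hr
    · intro r hr
      rw [mem_boxIdeal_iff]
      intro μ hμ
      by_contra hno
      push_neg at hno
      by_cases h0 : IsMinGen I 0
      · exact hno 0 h0 (boxExp_zero_le μ)
      · set W : Set (ℕ × ℕ) := {rt | ∃ (ha : rt.1 < n) (hb : rt.2 < d),
          μ ((⟨rt.1, ha⟩ : Fin n), (⟨rt.2, hb⟩ : Fin d)) ≠ 0} with hWdef
        have H : ∀ b : Fin n →₀ ℕ, (monomial b 1 : MvPolynomial (Fin n) k) ∈ I →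
            1 ≤ degE b → degE b ≤ d → ¬ SinW (n := n) d W b := by
          intro b hbI _ _ hSin
          obtain ⟨a, ha, hle⟩ := exists_minGen_boxExp_le hB hbI d
          apply hno a ha
          refine le_trans hle ?_
          rw [Finsupp.le_def]
          intro pp
          rw [boxExp_apply]
          split_ifs with hcell
          · have hw := hSin pp.1 pp.2 pp.1.isLt pp.2.isLt hcell.1 hcell.2
            obtain ⟨ha1, ha2, hne⟩ := hw
            have hpe : ((⟨((pp.1 : Fin n) : ℕ), ha1⟩ : Fin n), (⟨((pp.2 : Fin d) : ℕ), ha2⟩ : Fin d)) = pp := by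
              apply Prod.ext
              · apply Fin.ext; rfl
              · apply Fin.ext; rfl
            rw [hpe] at hne
            omega
          · exact Nat.zero_le _
        obtain ⟨m, c, hmn, hadj, hcells, hcov⟩ := separation hB d W H
        set q : Fin (n + 1) × (Fin n → Fin (d + 1)) :=
          (⟨m, by omega⟩, fun i => ⟨min (c (i : ℕ)) d, by omega⟩) with hqdef
        have hq1 : (q.1 : ℕ) = m := rfl
        have hcof : ∀ i, i < m → cOf q.2 i = c i := by
          intro i him
          have hin : i < n := lt_of_lt_of_le him hmn
          have hlt : c i < d := (hcells i him).1
          show (if h : i < n then ((⟨min (c i) d, by omega⟩ : Fin (d + 1)) : ℕ) else 0) = c i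
          rw [dif_pos hin]
          show min (c i) d = c i
          omega
        have hJleq : boxIdeal d I ≤ F q := by
          rw [hFdef]
          apply Ideal.span_le.mpr
          rintro qq ⟨a, ha, rfl⟩
          have hGa : 1 ≤ degE a := by
            by_contra hdeg
            have : degE a = 0 := by omega
            exact h0 (degE_one a this ▸ ha)
          obtain ⟨ρ, hρm, hc1, hc2⟩ := hcov a ha.1 hGa (hd a ha)
          have hρn : ρ < n := lt_of_lt_of_le hρm hmn
          have hcd : c ρ < d := (hcells ρ hρm).1
          rw [SetLike.mem_coe, mem_cSpan_iff]
          intro ν hν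
          rw [support_monomial, if_neg (one_ne_zero)] at hν
          rw [Finset.mem_singleton] at hν
          subst hν
          have hcof2 := hcof ρ hρm
          have h3' : cOf q.2 ρ < d := by rw [hcof2]; exact hcd
          refine ⟨ρ, by omega, hρn, h3', ?_⟩
          have hfe : (⟨cOf q.2 ρ, h3'⟩ : Fin d) = ⟨c ρ, hcd⟩ := Fin.ext hcof2
          rw [hfe, boxExp_apply]
          rw [if_pos ⟨hc1, hc2⟩]
          omega
        have hqSP : q ∈ SP := by
          rw [hSPdef, Finset.mem_filter]
          refine ⟨Finset.mem_univ _, ?_, hJleq⟩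
          intro i j hij hjm
          rw [hq1] at hjm
          rw [hcof i (by omega), hcof j hjm]
          exact mono_of_adj c m hadj i j hij hjm
        have hrq : r ∈ F q := by
          have := (mem_foldr L r).mp hr (F q) ((hLmem (F q)).mpr ⟨q, hqSP, rfl⟩)
          exact this
        rw [hFdef] at hrq
        rw [mem_cSpan_iff] at hrq
        obtain ⟨i, h1, h2, h3, hne⟩ := hrq μ hμ
        rw [hq1] at h1
        have hci : cOf q.2 i = c i := hcof i h1
        have h3' : c i < d := hci ▸ h3
        have hfe : (⟨cOf q.2 i, h3⟩ : Fin d) = ⟨c i, h3'⟩ := Fin.ext hci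
        rw [hfe] at hne
        exact (hcells i h1).2 ⟨h2, h3', hne⟩
  -- apply the colon chain lemma
  have hiff' : ∀ r, r ∈ p ↔ r * f ∈ L.foldr (· ⊓ ·) ⊤ := by
    intro r
    rw [← hdecomp]
    exact hiff r
  have hfJ' : f ∉ L.foldr (· ⊓ ·) ⊤ := by
    rw [← hdecomp]
    exact hfJ
  obtain ⟨Q, hQL, g, hgQ, hgiff⟩ := colon_chain L p hp f hiff' hfJ'
  obtain ⟨q, hqSP, rfl⟩ := (hLmem Q).mp hQL
  have hQprime : (F q).IsPrime := isPrime_cSpan _ _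
  have hpQ : p = F q := by
    ext r
    rw [hgiff r]
    constructor
    · intro hr
      rcases hQprime.mem_or_mem hr with h | h
      · exact h
      · exact absurd h hgQ
    · intro hr
      exact Ideal.mul_mem_right g _ hr
  refine ⟨q.1.val, cOf q.2, by omega, ?_, hpQ⟩
  exact (hSPgood q hqSP).1

end Assemble
end Aux

/-- every associated prime of `Ŝ/B(I)` is of the form
`(x_{i,c_i} ∣ 1 ≤ i ≤ m)` with `c_1 ≤ ⋯ ≤ c_m`. -/
theorem ass_box_quotient_form (n d : ℕ) (k : Type) [Field k]
    (I : Ideal (MvPolynomial (Fin n) k)) (hmon : IsMonomialIdeal I) (hB : IsBorelFixed I)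
    (hd : ∀ a : Fin n →₀ ℕ, IsMinGen I a → degE a ≤ d) :
    ∀ p ∈ associatedPrimes (MvPolynomial (Fin n × Fin d) k) ((MvPolynomial (Fin n × Fin d) k) ⧸ boxIdeal d I),
      ∃ (m : ℕ) (c : ℕ → ℕ), m ≤ n ∧ (∀ i j : ℕ, i ≤ j → j < m → c i ≤ c j) ∧
        p = Ideal.span {q : MvPolynomial (Fin n × Fin d) k | ∃ (i : ℕ) (h1 : i < m) (h2 : i < n) (h3 : c i < d),
          q = X ((⟨i, h2⟩ : Fin n), (⟨c i, h3⟩ : Fin d))} := by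
  intro p hass
  obtain ⟨m, c, h1, h2, h3⟩ := Aux.main hB hd p hass
  exact ⟨m, c, h1, h2, h3⟩

end Pol
end
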